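/- arXiv:1709.04500 — 5 statements merged into one kernel-verified Lean document; each statement's English description precedes it below -/
import Mathlib

section
/- For positive integers M1, M2 and positive reals p1, p2, the double sum ∑_{k=1}^{M2} ∑_{j=1}^{M1} (-1)^{j+k} C(M1,j) C(M2,k) · p2 k/(p1 j + p2 k) equals 1 − p2 M2 ∫_0^1 (1 − x^{p1})^{M1} (1 − x^{p2})^{M2−1} x^{p2−1} dx. -/
open Finset Real
set_option maxHeartbeats 1000000

theorem aux_one_sub_pow (y : ℝ) (n : ℕ) :
    (1 - y)^n = ∑ j ∈ range (n+1), (-1)^j * y^j * (n.choose j) := by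
  have h := add_pow (-y) 1 n
  rw [show (-y) + 1 = 1 - y by ring] at h
  rw [h]
  exact Finset.sum_congr rfl fun j _ => by rw [neg_pow]; ring

theorem aux_swap (s t : Finset ℕ) (c : ℕ → ℕ → ℝ) (e : ℕ → ℕ → ℝ) (he : ∀ j k, -1 < e j k) :
    (∫ x in (0:ℝ)..1, ∑ j ∈ s, ∑ k ∈ t, c j k * x ^ e j k)
    = ∑ j ∈ s, ∑ k ∈ t, c j k / (e j k + 1) := by
  have hint : ∀ j k : ℕ, IntervalIntegrable (fun x : ℝ => c j k * x ^ e j k)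
      MeasureTheory.volume 0 1 :=
    fun j k => (intervalIntegral.intervalIntegrable_rpow' (he j k)).const_mul _
  have hint2 : ∀ j : ℕ, IntervalIntegrable (fun x : ℝ => ∑ k ∈ t, c j k * x ^ e j k)
      MeasureTheory.volume 0 1 := fun j => by
    have h := IntervalIntegrable.sum (μ := MeasureTheory.volume) (a := 0) (b := 1) t
      (f := fun k x => c j k * x ^ e j k) (fun k _ => hint j k)
    rwa [Finset.sum_fn] at h
  rw [intervalIntegral.integral_finset_sum (fun j _ => hint2 j)]
  refine Finset.sum_congr rfl fun j _ => ?_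
  rw [intervalIntegral.integral_finset_sum (fun k _ => hint j k)]
  refine Finset.sum_congr rfl fun k _ => ?_
  rw [intervalIntegral.integral_const_mul, integral_rpow (Or.inl (he j k)),
    Real.one_rpow, Real.zero_rpow (ne_of_gt (by linarith [he j k]))]
  ring

theorem aux_integral (m1 m2 : ℕ) (p1 p2 : ℝ) (hp1 : 0 < p1) (hp2 : 0 < p2) :
    ∫ x in (0:ℝ)..1, (1 - x ^ p1) ^ m1 * (1 - x ^ p2) ^ m2 * x ^ (p2 - 1)
    = ∑ j ∈ range (m1+1), ∑ k ∈ range (m2+1),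
        (-1:ℝ)^(j+k) * (m1.choose j) * (m2.choose k) / (p1*j + p2*k + p2) := by
  have hexp : ∀ j k : ℕ, (-1:ℝ) < p1*j + p2*k + p2 - 1 := by
    intro j k
    have h1 : (0:ℝ) ≤ p1*j := by positivity
    have h2 : (0:ℝ) ≤ p2*k := by positivity
    linarith
  have hcong : ∫ x in (0:ℝ)..1, (1 - x ^ p1) ^ m1 * (1 - x ^ p2) ^ m2 * x ^ (p2 - 1)
      = ∫ x in (0:ℝ)..1, ∑ j ∈ range (m1+1), ∑ k ∈ range (m2+1),
          ((-1:ℝ)^(j+k) * (m1.choose j) * (m2.choose k)) * x ^ (p1*j + p2*k + p2 - 1) := by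
    apply intervalIntegral.integral_congr_ae
    apply MeasureTheory.ae_of_all
    intro x hx
    rw [Set.uIoc_of_le (by norm_num : (0:ℝ) ≤ 1)] at hx
    obtain ⟨hx0, hx1⟩ := hx
    rw [aux_one_sub_pow, aux_one_sub_pow, Finset.sum_mul_sum]
    simp only [Finset.sum_mul]
    refine Finset.sum_congr rfl fun j _ => Finset.sum_congr rfl fun k _ => ?_
    rw [← Real.rpow_natCast (x ^ p1) j, ← Real.rpow_natCast (x ^ p2) k,
      ← Real.rpow_mul hx0.le, ← Real.rpow_mul hx0.le,
      show p1*(j:ℝ)+p2*(k:ℝ)+p2-1 = p1*j + (p2*k + (p2-1)) by ring,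
      Real.rpow_add hx0, Real.rpow_add hx0, pow_add]
    ring
  rw [hcong, aux_swap (range (m1+1)) (range (m2+1))
    (fun j k => (-1:ℝ)^(j+k) * (m1.choose j) * (m2.choose k))
    (fun j k => p1*j + p2*k + p2 - 1) hexp]
  refine Finset.sum_congr rfl fun j _ => Finset.sum_congr rfl fun k _ => ?_
  rw [show p1*(j:ℝ)+p2*(k:ℝ)+p2-1+1 = p1*j+p2*k+p2 by ring]

theorem aux_shift (f : ℕ → ℝ) (n : ℕ) : ∑ k ∈ Icc 1 n, f k = ∑ k ∈ range n, f (k+1) := by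
  rw [← Finset.Ico_add_one_right_eq_Icc, Finset.sum_Ico_eq_sum_range]
  exact Finset.sum_congr (by rw [Nat.add_sub_cancel]) fun i _ => by rw [add_comm]

theorem aux_alt (n : ℕ) (hn : 0 < n) : ∑ k ∈ Icc 1 n, (-1:ℝ)^k * (n.choose k) = -1 := by
  have h := Int.alternating_sum_range_choose (n := n)
  rw [if_neg hn.ne'] at h
  have h' : ∑ i ∈ range (n+1), (-1:ℝ)^i * (n.choose i) = 0 := by exact_mod_cast h
  rw [Finset.sum_range_succ'] at h'
  simp only [pow_zero, Nat.choose_zero_right, Nat.cast_one, one_mul] at h'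
  rw [aux_shift]
  linarith


theorem aux_key (M1 M2 : ℕ) (hM2 : 0 < M2) (p1 p2 : ℝ) :
    ∀ j k : ℕ, p2 * (M2:ℝ) * ((-1:ℝ)^(j+k) * (M1.choose j) * ((M2-1).choose k) / (p1*j + p2*k + p2))
      = -((-1:ℝ)^(j+(k+1)) * (M1.choose j) * (M2.choose (k+1)) * (p2*((k+1:ℕ):ℝ)/(p1*j + p2*((k+1:ℕ):ℝ)))) := by
  intro j k
  have h := Nat.add_one_mul_choose_eq (M2-1) k
  rw [show M2 - 1 + 1 = M2 from Nat.succ_pred_eq_of_pos hM2] at h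
  have hc : (M2:ℝ) * ((M2-1).choose k) = (M2.choose (k+1)) * ((k:ℝ)+1) := by exact_mod_cast h
  push_cast
  rw [show j+(k+1) = (j+k)+1 from rfl, pow_succ]
  linear_combination (p2 * (-1:ℝ)^(j+k) * (M1.choose j) / (p1*(j:ℝ) + p2*(k:ℝ) + p2)) * hc

theorem stmt_1 (M1 M2 : ℕ) (hM1 : 0 < M1) (hM2 : 0 < M2)
    (p1 p2 : ℝ) (hp1 : 0 < p1) (hp2 : 0 < p2) :
    ∑ k ∈ Finset.Icc 1 M2, ∑ j ∈ Finset.Icc 1 M1,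
      (-1 : ℝ) ^ (j + k) * (M1.choose j) * (M2.choose k) *
        (p2 * k / (p1 * j + p2 * k))
    = 1 - p2 * M2 *
        ∫ x in (0:ℝ)..1, (1 - x ^ p1) ^ M1 * (1 - x ^ p2) ^ (M2 - 1) * x ^ (p2 - 1) := by
  have hI := aux_integral M1 (M2-1) p1 p2 hp1 hp2
  rw [Nat.sub_add_cancel hM2] at hI
  rw [hI]
  have h1 : p2 * (M2:ℝ) * ∑ j ∈ range (M1+1), ∑ k ∈ range M2,
        (-1:ℝ)^(j+k) * (M1.choose j) * ((M2-1).choose k) / (p1*j + p2*k + p2)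
      = -∑ j ∈ range (M1+1), ∑ k ∈ Icc 1 M2,
        (-1:ℝ)^(j+k) * (M1.choose j) * (M2.choose k) * (p2*k/(p1*j + p2*k)) := by
    rw [Finset.mul_sum, ← Finset.sum_neg_distrib]
    refine Finset.sum_congr rfl fun j _ => ?_
    rw [Finset.mul_sum, ← Finset.sum_neg_distrib,
      aux_shift (fun k => -((-1:ℝ)^(j+k) * (M1.choose j) * (M2.choose k) * (p2*k/(p1*j+p2*k)))) M2]
    exact Finset.sum_congr rfl fun k _ => aux_key M1 M2 hM2 p1 p2 j k
  rw [h1]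
  have h0 : ∑ k ∈ Icc 1 M2, (-1:ℝ)^(0+k) * ((M1.choose 0 : ℕ) : ℝ) * (M2.choose k) *
      (p2*k/(p1*(0:ℕ) + p2*k)) = -1 := by
    have e1 : ∀ k ∈ Icc 1 M2, (-1:ℝ)^(0+k) * ((M1.choose 0 : ℕ) : ℝ) * (M2.choose k) *
        (p2*k/(p1*(0:ℕ) + p2*k)) = (-1:ℝ)^k * (M2.choose k) := by
      intro k hk
      have hk1 : 1 ≤ k := (Finset.mem_Icc.mp hk).1
      have hkpos : (0:ℝ) < p2 * k := by
        have : (1:ℝ) ≤ (k:ℝ) := by exact_mod_cast hk1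
        nlinarith
      rw [Nat.choose_zero_right]
      push_cast
      rw [show p1 * 0 + p2 * (k:ℝ) = p2 * k by ring, div_self hkpos.ne']
      ring
    rw [Finset.sum_congr rfl e1, aux_alt M2 hM2]
  rw [Finset.sum_range_succ', h0,
    ← aux_shift (fun j => ∑ k ∈ Icc 1 M2,
      (-1:ℝ)^(j+k) * (M1.choose j) * (M2.choose k) * (p2*k/(p1*j + p2*k))) M1,
    Finset.sum_comm]
  ring
end

section
/- Let λ > 1, ν1, ν2 positive integers, and for each positive integer M set I_M = ∫_0^1 x^{λ−1}(1−x)^{ν1 M}(1−x^λ)^{ν2 M − 1} dx. Then I_M ~ Γ(λ)/(ν1^λ M^λ) as M → ∞, i.e. I_M · ν1^λ M^λ / Γ(λ) → 1. -/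
open Real Filter

lemma gammaSeq_integral (s : ℝ) (hs : 0 < s) (n : ℕ) :
    (n : ℝ) ^ s * ∫ x in (0:ℝ)..1, x ^ (s - 1) * (1 - x) ^ n = Real.GammaSeq s n := by
  have h := Complex.GammaSeq_eq_betaIntegral_of_re_pos (s := (s : ℂ)) (by simpa using hs) n
  have hbeta : Complex.betaIntegral (s : ℂ) ((n : ℂ) + 1)
      = ((∫ x in (0:ℝ)..1, x ^ (s - 1) * (1 - x) ^ n : ℝ) : ℂ) := by
    rw [Complex.betaIntegral, ← intervalIntegral.integral_ofReal]
    refine intervalIntegral.integral_congr fun x hx => ?_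
    rw [Set.uIcc_of_le (by norm_num : (0:ℝ) ≤ 1)] at hx
    have hx0 : (0:ℝ) ≤ x := hx.1
    rw [Complex.ofReal_mul, Complex.ofReal_pow, Complex.ofReal_cpow hx0, Complex.ofReal_sub,
      Complex.ofReal_one]
    rw [show ((n : ℂ) + 1 - 1 : ℂ) = ((n : ℕ) : ℂ) by ring, Complex.cpow_natCast]
    push_cast
    ring
  have hgs : Complex.GammaSeq (s : ℂ) n = ((Real.GammaSeq s n : ℝ) : ℂ) := by
    dsimp only [Real.GammaSeq, Complex.GammaSeq]
    push_cast
    rw [Complex.ofReal_cpow n.cast_nonneg, Complex.ofReal_natCast]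
  rw [hgs, hbeta] at h
  have : ((Real.GammaSeq s n : ℝ) : ℂ)
      = (((n : ℝ) ^ s * ∫ x in (0:ℝ)..1, x ^ (s - 1) * (1 - x) ^ n : ℝ) : ℂ) := by
    rw [h, Complex.ofReal_mul, Complex.ofReal_cpow n.cast_nonneg, Complex.ofReal_natCast]
  exact (Complex.ofReal_injective this).symm

theorem stmt_7 (l : ℝ) (hl : 1 < l) (ν1 ν2 : ℕ) (hν1 : 0 < ν1) (hν2 : 0 < ν2) :
    Tendsto
      (fun M : ℕ =>
        (∫ x in (0:ℝ)..1,
            x ^ (l - 1) * (1 - x) ^ (ν1 * M) * (1 - x ^ l) ^ (ν2 * M - 1)) *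
          (ν1 : ℝ) ^ l * (M : ℝ) ^ l / Real.Gamma l)
      atTop (nhds 1) := by
  have hl0 : (0 : ℝ) < l := lt_trans one_pos hl
  have hl1 : (0 : ℝ) < l - 1 := by linarith
  have hΓ : 0 < Real.Gamma l := Real.Gamma_pos_of_pos hl0
  have hrp : ∀ p : ℝ, 0 < p → Continuous fun x : ℝ => x ^ p := fun p hp =>
    continuous_id.rpow_const fun x => Or.inr hp.le
  have hcA : ∀ p : ℝ, 0 < p → ∀ k : ℕ,
      Continuous fun x : ℝ => x ^ p * (1 - x) ^ k := fun p hp k =>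
    (hrp p hp).mul ((continuous_const.sub continuous_id).pow k)
  have hcI : ∀ M : ℕ, Continuous fun x : ℝ =>
      x ^ (l - 1) * (1 - x) ^ (ν1 * M) * (1 - x ^ l) ^ (ν2 * M - 1) := fun M =>
    (hcA (l - 1) hl1 (ν1 * M)).mul ((continuous_const.sub (hrp l hl0)).pow _)
  set I : ℕ → ℝ := fun M => ∫ x in (0:ℝ)..1,
      x ^ (l - 1) * (1 - x) ^ (ν1 * M) * (1 - x ^ l) ^ (ν2 * M - 1) with hIdef
  have hNtop : Tendsto (fun M : ℕ => ν1 * M) atTop atTop :=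
    tendsto_atTop_mono (fun M => Nat.le_mul_of_pos_left M hν1) tendsto_id
  -- squeeze bounds, for M ≥ 1
  have hIneq : ∀ M : ℕ, 1 ≤ M →
      (Real.GammaSeq l (ν1 * M)
          - ((ν2 * M : ℕ) : ℝ) * ((ν1 * M : ℕ) : ℝ) ^ (-l) * Real.GammaSeq (2 * l) (ν1 * M)
        ≤ I M * ((ν1 * M : ℕ) : ℝ) ^ l)
      ∧ I M * ((ν1 * M : ℕ) : ℝ) ^ l ≤ Real.GammaSeq l (ν1 * M) := by
    intro M hM
    have hMpos : 0 < M := hM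
    have hν2M : 0 < ν2 * M := Nat.mul_pos hν2 hMpos
    have hNpos : (0 : ℝ) < ((ν1 * M : ℕ) : ℝ) := by
      exact_mod_cast Nat.mul_pos hν1 hMpos
    -- pointwise bounds
    have hpt : ∀ x ∈ Set.Icc (0:ℝ) 1,
        (x ^ (l-1) * (1-x) ^ (ν1*M) - ((ν2*M : ℕ) : ℝ) * (x ^ (2*l-1) * (1-x) ^ (ν1*M))
          ≤ x ^ (l-1) * (1-x) ^ (ν1*M) * (1 - x ^ l) ^ (ν2*M-1))
        ∧ x ^ (l-1) * (1-x) ^ (ν1*M) * (1 - x ^ l) ^ (ν2*M-1)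
          ≤ x ^ (l-1) * (1-x) ^ (ν1*M) := by
      intro x hx
      obtain ⟨hx0, hx1⟩ := hx
      have hxl0 : 0 ≤ x ^ l := Real.rpow_nonneg hx0 l
      have hxl1 : x ^ l ≤ 1 := Real.rpow_le_one hx0 hx1 hl0.le
      have h1x : (0:ℝ) ≤ 1 - x := by linarith
      have hA0 : 0 ≤ x ^ (l-1) * (1-x) ^ (ν1*M) :=
        mul_nonneg (Real.rpow_nonneg hx0 _) (pow_nonneg h1x _)
      constructor
      · have hber : 1 + ((ν2*M - 1 : ℕ) : ℝ) * (-(x ^ l)) ≤ (1 + -(x ^ l)) ^ (ν2*M - 1) :=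
          one_add_mul_le_pow (by linarith) (ν2*M - 1)
        have hsplit : x ^ (2*l - 1) = x ^ (l - 1) * x ^ l := by
          rw [show 2*l - 1 = (l-1) + l by ring]
          exact Real.rpow_add' hx0 (by linarith)
        have hcast : ((ν2*M - 1 : ℕ) : ℝ) ≤ ((ν2*M : ℕ) : ℝ) := by
          exact_mod_cast Nat.sub_le _ _
        have hber' : x ^ (l-1) * (1-x) ^ (ν1*M) * (1 + ((ν2*M - 1 : ℕ) : ℝ) * (-(x ^ l)))
            ≤ x ^ (l-1) * (1-x) ^ (ν1*M) * (1 + -(x ^ l)) ^ (ν2*M - 1) :=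
          mul_le_mul_of_nonneg_left hber hA0
        have hxy0 : 0 ≤ (x ^ (l-1) * (1-x) ^ (ν1*M)) * x ^ l := mul_nonneg hA0 hxl0
        rw [hsplit, show (1 : ℝ) - x ^ l = 1 + -(x ^ l) by ring]
        nlinarith [mul_le_mul_of_nonneg_right hcast hxy0]
      · have h1 : (1 - x ^ l) ^ (ν2*M-1) ≤ 1 := by
          apply pow_le_one₀ (by linarith) (by linarith)
        exact mul_le_of_le_one_right hA0 h1
    have hintI := (hcI M).intervalIntegrable (μ := MeasureTheory.volume) (0:ℝ) 1
    have hintA := (hcA (l-1) hl1 (ν1*M)).intervalIntegrable (μ := MeasureTheory.volume) (0:ℝ) 1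
    have hintC := (hcA (2*l-1) (by linarith) (ν1*M)).intervalIntegrable (μ := MeasureTheory.volume) (0:ℝ) 1
    have hup : I M ≤ ∫ x in (0:ℝ)..1, x ^ (l-1) * (1-x) ^ (ν1*M) :=
      intervalIntegral.integral_mono_on (by norm_num) hintI hintA fun x hx => (hpt x hx).2
    have hlow : (∫ x in (0:ℝ)..1, x ^ (l-1) * (1-x) ^ (ν1*M))
        - ((ν2*M : ℕ) : ℝ) * ∫ x in (0:ℝ)..1, x ^ (2*l-1) * (1-x) ^ (ν1*M) ≤ I M := by
      have hsub : (∫ x in (0:ℝ)..1,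
            (x ^ (l-1) * (1-x) ^ (ν1*M)
              - ((ν2*M : ℕ) : ℝ) * (x ^ (2*l-1) * (1-x) ^ (ν1*M))))
          = (∫ x in (0:ℝ)..1, x ^ (l-1) * (1-x) ^ (ν1*M))
            - ((ν2*M : ℕ) : ℝ) * ∫ x in (0:ℝ)..1, x ^ (2*l-1) * (1-x) ^ (ν1*M) := by
        rw [intervalIntegral.integral_sub hintA (hintC.const_mul _),
          intervalIntegral.integral_const_mul]
      rw [← hsub]
      exact intervalIntegral.integral_mono_on (by norm_num)
        (hintA.sub (hintC.const_mul _)) hintI fun x hx => (hpt x hx).1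
    have hGA : ((ν1*M : ℕ) : ℝ) ^ l * ∫ x in (0:ℝ)..1, x ^ (l-1) * (1-x) ^ (ν1*M)
        = Real.GammaSeq l (ν1*M) := gammaSeq_integral l hl0 (ν1*M)
    have hGC : ((ν1*M : ℕ) : ℝ) ^ (2*l) * ∫ x in (0:ℝ)..1, x ^ (2*l-1) * (1-x) ^ (ν1*M)
        = Real.GammaSeq (2*l) (ν1*M) := gammaSeq_integral (2*l) (by linarith) (ν1*M)
    have hpowpos : (0:ℝ) < ((ν1*M : ℕ) : ℝ) ^ l := Real.rpow_pos_of_pos hNpos l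
    constructor
    · have hcomb : ((ν1*M : ℕ) : ℝ) ^ (-l) * ((ν1*M : ℕ) : ℝ) ^ (2*l)
          = ((ν1*M : ℕ) : ℝ) ^ l := by
        rw [← Real.rpow_add hNpos]; congr 1; ring
      calc Real.GammaSeq l (ν1 * M)
            - ((ν2 * M : ℕ) : ℝ) * ((ν1 * M : ℕ) : ℝ) ^ (-l) * Real.GammaSeq (2 * l) (ν1 * M)
          = ((ν1*M : ℕ) : ℝ) ^ l *
            ((∫ x in (0:ℝ)..1, x ^ (l-1) * (1-x) ^ (ν1*M))
              - ((ν2*M : ℕ) : ℝ) * ∫ x in (0:ℝ)..1, x ^ (2*l-1) * (1-x) ^ (ν1*M)) := by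
            rw [← hGA, ← hGC]
            rw [show ((ν2 * M : ℕ) : ℝ) * ((ν1 * M : ℕ) : ℝ) ^ (-l) *
                (((ν1*M : ℕ) : ℝ) ^ (2*l) * ∫ x in (0:ℝ)..1, x ^ (2*l-1) * (1-x) ^ (ν1*M))
              = ((ν2 * M : ℕ) : ℝ) * (((ν1 * M : ℕ) : ℝ) ^ (-l) * ((ν1*M : ℕ) : ℝ) ^ (2*l)) *
                ∫ x in (0:ℝ)..1, x ^ (2*l-1) * (1-x) ^ (ν1*M) by ring, hcomb]
            ring
        _ ≤ ((ν1*M : ℕ) : ℝ) ^ l * I M := mul_le_mul_of_nonneg_left hlow hpowpos.le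
        _ = I M * ((ν1*M : ℕ) : ℝ) ^ l := mul_comm _ _
    · calc I M * ((ν1*M : ℕ) : ℝ) ^ l
          ≤ (∫ x in (0:ℝ)..1, x ^ (l-1) * (1-x) ^ (ν1*M)) * ((ν1*M : ℕ) : ℝ) ^ l :=
            mul_le_mul_of_nonneg_right hup hpowpos.le
        _ = Real.GammaSeq l (ν1*M) := by rw [← hGA]; ring
  -- limits
  have hupperT : Tendsto (fun M : ℕ => Real.GammaSeq l (ν1 * M)) atTop (nhds (Real.Gamma l)) :=
    (Real.GammaSeq_tendsto_Gamma l).comp hNtop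
  have hcoef : Tendsto (fun M : ℕ => ((ν2 * M : ℕ) : ℝ) * ((ν1 * M : ℕ) : ℝ) ^ (-l))
      atTop (nhds 0) := by
    have h0 : Tendsto (fun M : ℕ => (M : ℝ) ^ (1 - l)) atTop (nhds 0) := by
      have := (tendsto_rpow_neg_atTop hl1).comp tendsto_natCast_atTop_atTop
      simpa [Function.comp_def, neg_sub] using this
    have h1 : Tendsto (fun M : ℕ => (ν2 : ℝ) * (ν1 : ℝ) ^ (-l) * (M : ℝ) ^ (1 - l))
        atTop (nhds 0) := by
      simpa using h0.const_mul ((ν2 : ℝ) * (ν1 : ℝ) ^ (-l))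
    refine Tendsto.congr' ?_ h1
    filter_upwards [eventually_ge_atTop 1] with M hM
    have hM0 : (0:ℝ) < (M : ℝ) := by exact_mod_cast hM
    have hmul : ((ν1 : ℝ) * (M : ℝ)) ^ (-l) = (ν1 : ℝ) ^ (-l) * (M : ℝ) ^ (-l) :=
      Real.mul_rpow (Nat.cast_nonneg _) (Nat.cast_nonneg _)
    have hMr : (M : ℝ) ^ (1 - l) = (M : ℝ) * (M : ℝ) ^ (-l) := by
      rw [show (1:ℝ) - l = 1 + -l by ring, Real.rpow_add hM0, Real.rpow_one]
    push_cast
    rw [hmul, hMr]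
    ring
  have htermT : Tendsto (fun M : ℕ =>
      ((ν2 * M : ℕ) : ℝ) * ((ν1 * M : ℕ) : ℝ) ^ (-l) * Real.GammaSeq (2 * l) (ν1 * M))
      atTop (nhds 0) := by
    have := hcoef.mul ((Real.GammaSeq_tendsto_Gamma (2 * l)).comp hNtop)
    simpa using this
  have hlowerT : Tendsto (fun M : ℕ =>
      Real.GammaSeq l (ν1 * M)
        - ((ν2 * M : ℕ) : ℝ) * ((ν1 * M : ℕ) : ℝ) ^ (-l) * Real.GammaSeq (2 * l) (ν1 * M))
      atTop (nhds (Real.Gamma l)) := by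
    simpa using hupperT.sub htermT
  have main : Tendsto (fun M : ℕ => I M * ((ν1 * M : ℕ) : ℝ) ^ l)
      atTop (nhds (Real.Gamma l)) := by
    refine tendsto_of_tendsto_of_tendsto_of_le_of_le' hlowerT hupperT ?_ ?_
    · filter_upwards [eventually_ge_atTop 1] with M hM using (hIneq M hM).1
    · filter_upwards [eventually_ge_atTop 1] with M hM using (hIneq M hM).2
  have final := main.div_const (Real.Gamma l)
  rw [div_self hΓ.ne'] at final
  refine Tendsto.congr (fun M => ?_) final
  have : ((ν1 * M : ℕ) : ℝ) ^ l = (ν1 : ℝ) ^ l * (M : ℝ) ^ l := by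
    push_cast
    exact Real.mul_rpow (Nat.cast_nonneg _) (Nat.cast_nonneg _)
  rw [this, mul_assoc]
end

section
/- Let S_N be the number of i.i.d. draws needed to collect all N coupons when coupon j has probability q_j > 0 (∑ q_j = 1). For any real r > 0, E[Γ(S_N + r)/Γ(S_N)] = r ∫_0^∞ t^{r−1} [1 − ∏_{j=1}^N (1 − e^{−q_j t})] dt. -/
open MeasureTheory Real ProbabilityTheory

lemma gamma_ratio (r : ℝ) (hr : 0 < r) (n : ℕ) :
    Real.Gamma (n + r) / Real.Gamma n = r * ∑ k ∈ Finset.range n, Real.Gamma (r + k) / (Nat.factorial k) := by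
  induction n with
  | zero => simp [Real.Gamma_zero]
  | succ n ih =>
    rw [Finset.sum_range_succ, mul_add]
    rw [← ih]
    have hΓpos : 0 < Real.Gamma (r + n) := Real.Gamma_pos_of_pos (by positivity)
    have h1 : Real.Gamma ((n + 1 : ℕ) + r) = (n + r) * Real.Gamma (n + r) := by
      push_cast
      rw [show (n : ℝ) + 1 + r = ((n : ℝ) + r) + 1 by ring]
      exact Real.Gamma_add_one (by positivity)
    have h2 : Real.Gamma ((n + 1 : ℕ) : ℝ) = (Nat.factorial n : ℝ) := by
      push_cast
      exact_mod_cast Real.Gamma_nat_eq_factorial n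
    rw [h1, h2]
    have hadd : (n:ℝ) + r = r + n := by ring
    rcases Nat.eq_zero_or_pos n with h0 | hn
    · subst h0
      simp only [Nat.cast_zero, zero_add, Real.Gamma_zero, div_zero, Finset.range_zero,
        Finset.sum_empty, mul_zero, zero_add, Nat.factorial_zero, Nat.cast_one, div_one, hadd]
      norm_num
    · have h3 : Real.Gamma (n : ℝ) = (Nat.factorial (n-1) : ℝ) := by
        have : ((n - 1 : ℕ) : ℝ) + 1 = (n : ℝ) := by
          have := Nat.succ_pred_eq_of_pos hn
          exact_mod_cast congrArg (Nat.cast : ℕ → ℝ) this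
        rw [← this]; exact Real.Gamma_nat_eq_factorial _
      have h4 : (Nat.factorial n : ℝ) = n * Nat.factorial (n - 1) := by
        rw [← Nat.mul_factorial_pred hn.ne']
        push_cast
        ring
      have hfac : (0:ℝ) < Nat.factorial (n-1) := by positivity
      have hnn : (0:ℝ) < n := by exact_mod_cast hn
      field_simp [h3, h4, hadd]
      rw [h3, h4]; ring

lemma gamma_lintegral {s : ℝ} (hs : 0 < s) :
    ∫⁻ t in Set.Ioi (0:ℝ), ENNReal.ofReal (Real.exp (-t) * t ^ (s - 1)) = ENNReal.ofReal (Real.Gamma s) := by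
  rw [Real.Gamma_eq_integral hs]
  rw [← ofReal_integral_eq_lintegral_ofReal (Real.GammaIntegral_convergent hs)]
  filter_upwards [ae_restrict_mem measurableSet_Ioi] with t ht
  exact mul_nonneg (Real.exp_pos _).le (Real.rpow_nonneg (le_of_lt ht) _)

lemma exp_hasSum (x : ℝ) : HasSum (fun k : ℕ => x ^ k / Nat.factorial k) (Real.exp x) := by
  have h := Real.summable_pow_div_factorial x
  have : Real.exp x = ∑' k : ℕ, x ^ k / Nat.factorial k := by
    rw [Real.exp_eq_exp_ℝ, NormedSpace.exp_eq_tsum_div]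
  rw [this]
  exact h.hasSum

lemma prod_one_sub_expand {N : ℕ} (a : Fin N → ℝ) :
    ∏ j, (1 - a j) = ∑ J ∈ Finset.univ.powerset, (-1) ^ J.card * ∏ j ∈ J, a j := by
  have := Finset.prod_add (fun j => -a j) (fun _ => (1:ℝ)) Finset.univ
  simp only [Finset.prod_const_one, mul_one] at this
  calc ∏ j, (1 - a j) = ∏ j, (-a j + 1) := by congr 1; ext j; ring
    _ = ∑ J ∈ Finset.univ.powerset, ∏ j ∈ J, (-a j) := this
    _ = ∑ J ∈ Finset.univ.powerset, (-1) ^ J.card * ∏ j ∈ J, a j := by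
        refine Finset.sum_congr rfl fun J _ => ?_
        have h1 : ∏ j ∈ J, (-a j) = ∏ j ∈ J, ((-1 : ℝ) * a j) := by
          refine Finset.prod_congr rfl fun j _ => by ring
        rw [h1, Finset.prod_mul_distrib, Finset.prod_const]

lemma indep_miss {Ω : Type*} [MeasurableSpace Ω] (μ : Measure Ω) [IsProbabilityMeasure μ]
    {N : ℕ} (q : Fin N → ℝ) (hq : ∀ j, 0 < q j) (hsum : ∑ j, q j = 1)
    (X : ℕ → Ω → Fin N) (hXmeas : ∀ i, Measurable (X i))
    (hindep : iIndepFun X μ)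
    (hdist : ∀ i j, μ {ω | X i ω = j} = ENNReal.ofReal (q j))
    (J : Finset (Fin N)) (k : ℕ) :
    μ {ω | ∀ i < k, X i ω ∉ J} = ENNReal.ofReal ((1 - ∑ j ∈ J, q j) ^ k) := by
  have hqJ_le : ∑ j ∈ J, q j ≤ 1 := by
    rw [← hsum]
    exact Finset.sum_le_sum_of_subset_of_nonneg (Finset.subset_univ J)
      (fun j _ _ => (hq j).le)
  have hqJ_nn : 0 ≤ ∑ j ∈ J, q j := Finset.sum_nonneg fun j _ => (hq j).le
  have hset : {ω | ∀ i < k, X i ω ∉ J} = ⋂ i ∈ Finset.range k, X i ⁻¹' ((↑J : Set (Fin N))ᶜ) := by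
    ext ω
    simp [Set.mem_iInter, Finset.mem_range]
  have hindiv : ∀ i : ℕ, μ (X i ⁻¹' ((↑J : Set (Fin N))ᶜ)) = ENNReal.ofReal (1 - ∑ j ∈ J, q j) := by
    intro i
    have hJm : MeasurableSet (↑J : Set (Fin N)) := (J : Set (Fin N)).toFinite.measurableSet
    have hpre : X i ⁻¹' (↑J : Set (Fin N)) = ⋃ j ∈ J, X i ⁻¹' {j} := by
      ext ω; simp
    have hmJ : μ (X i ⁻¹' (↑J : Set (Fin N))) = ENNReal.ofReal (∑ j ∈ J, q j) := by
      rw [hpre, measure_biUnion_finset ?_ (fun j _ => (hXmeas i) (measurableSet_singleton j))]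
      · rw [ENNReal.ofReal_sum_of_nonneg (fun j _ => (hq j).le)]
        refine Finset.sum_congr rfl fun j _ => ?_
        rw [← hdist i j]
        rfl
      · intro a _ b _ hab
        simp only [Function.onFun, Set.disjoint_left]
        intro ω hωa hωb
        exact hab (by simp at hωa hωb; rw [← hωa, hωb])
    rw [Set.preimage_compl, measure_compl ((hXmeas i) hJm) (measure_ne_top μ _), hmJ]
    rw [measure_univ, ← ENNReal.ofReal_one, ← ENNReal.ofReal_sub _ hqJ_nn]
  rw [hset, hindep.measure_inter_preimage_eq_mul (Finset.range k)
    (fun i _ => (J : Set (Fin N)).toFinite.measurableSet.compl)]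
  simp only [hindiv, Finset.prod_const, Finset.card_range]
  rw [← ENNReal.ofReal_pow (by linarith)]

lemma meas_E {Ω : Type*} [MeasurableSpace Ω] (μ : Measure Ω) [IsProbabilityMeasure μ]
    {N : ℕ} (q : Fin N → ℝ) (hq : ∀ j, 0 < q j) (hsum : ∑ j, q j = 1)
    (X : ℕ → Ω → Fin N) (hXmeas : ∀ i, Measurable (X i))
    (hindep : iIndepFun X μ)
    (hdist : ∀ i j, μ {ω | X i ω = j} = ENNReal.ofReal (q j))
    (k : ℕ) :
    (μ {ω | ∀ j, ∃ i < k, X i ω = j}).toReal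
      = ∑ J ∈ (Finset.univ : Finset (Fin N)).powerset,
          (-1) ^ J.card * (1 - ∑ j ∈ J, q j) ^ k := by
  classical
  set B : Fin N → Set Ω := fun j => {ω | ∃ i < k, X i ω = j} with hB
  have hBmeas : ∀ j, MeasurableSet (B j) := by
    intro j
    have : B j = ⋃ i ∈ Finset.range k, X i ⁻¹' {j} := by
      ext ω; simp [hB, Set.mem_setOf_eq]
    rw [this]
    exact Finset.measurableSet_biUnion _ fun i _ => (hXmeas i) (measurableSet_singleton j)
  set C : Finset (Fin N) → Set Ω := fun J => {ω | ∀ i < k, X i ω ∉ J} with hC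
  have hCmeas : ∀ J, MeasurableSet (C J) := by
    intro J
    have : C J = ⋂ i ∈ Finset.range k, X i ⁻¹' ((↑J : Set (Fin N))ᶜ) := by
      ext ω; simp [hC, Set.mem_setOf_eq]
    rw [this]
    exact Finset.measurableSet_biInter _ fun i _ =>
      (hXmeas i) ((J : Set (Fin N)).toFinite.measurableSet.compl)
  have hE : MeasurableSet {ω | ∀ j, ∃ i < k, X i ω = j} := by
    have : {ω | ∀ j, ∃ i < k, X i ω = j} = ⋂ j, B j := by
      ext ω; simp [hB, Set.mem_setOf_eq]
    rw [this]
    exact MeasurableSet.iInter fun j => hBmeas j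
  have hptwise : ∀ ω, Set.indicator {ω | ∀ j, ∃ i < k, X i ω = j} (1 : Ω → ℝ) ω
      = ∑ J ∈ (Finset.univ : Finset (Fin N)).powerset,
          (-1) ^ J.card * Set.indicator (C J) (1 : Ω → ℝ) ω := by
    intro ω
    have h1 : Set.indicator {ω | ∀ j, ∃ i < k, X i ω = j} (1 : Ω → ℝ) ω
        = ∏ j, (if ω ∈ B j then (1:ℝ) else 0) := by
      rw [Fintype.prod_boole, Set.indicator_apply]
      congr 1
    have h2 : ∀ j, (if ω ∈ B j then (1:ℝ) else 0) = 1 - (if ω ∉ B j then (1:ℝ) else 0) := by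
      intro j; by_cases h : ω ∈ B j <;> simp [h]
    have h3 : ∀ J : Finset (Fin N), (∏ j ∈ J, (if ω ∉ B j then (1:ℝ) else 0))
        = Set.indicator (C J) (1 : Ω → ℝ) ω := by
      intro J
      rw [Finset.prod_boole, Set.indicator_apply]
      simp only [Pi.one_apply]
      congr 1
      simp only [hC, Set.mem_setOf_eq, hB, eq_iff_iff]
      constructor
      · intro h i hi hmem
        exact h _ hmem ⟨i, hi, rfl⟩
      · rintro h j hj ⟨i, hi, rfl⟩
        exact h i hi hj
    rw [h1]
    simp_rw [h2]
    rw [prod_one_sub_expand]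
    exact Finset.sum_congr rfl fun J _ => by rw [h3]
  have hint : ∀ J : Finset (Fin N),
      Integrable (fun ω => (-1:ℝ) ^ J.card * Set.indicator (C J) (1 : Ω → ℝ) ω) μ := by
    intro J
    exact (((integrable_const (1:ℝ)).indicator (hCmeas J)).const_mul _)
  calc (μ {ω | ∀ j, ∃ i < k, X i ω = j}).toReal
      = ∫ ω, Set.indicator {ω | ∀ j, ∃ i < k, X i ω = j} (1 : Ω → ℝ) ω ∂μ := by
        rw [integral_indicator_one hE, measureReal_def]
    _ = ∫ ω, ∑ J ∈ (Finset.univ : Finset (Fin N)).powerset,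
          (-1) ^ J.card * Set.indicator (C J) (1 : Ω → ℝ) ω ∂μ := by
        exact integral_congr_ae (ae_of_all _ hptwise)
    _ = ∑ J ∈ (Finset.univ : Finset (Fin N)).powerset,
          ∫ ω, (-1) ^ J.card * Set.indicator (C J) (1 : Ω → ℝ) ω ∂μ := by
        exact integral_finset_sum _ fun J _ => hint J
    _ = ∑ J ∈ (Finset.univ : Finset (Fin N)).powerset,
          (-1) ^ J.card * (1 - ∑ j ∈ J, q j) ^ k := by
        refine Finset.sum_congr rfl fun J _ => ?_
        rw [integral_const_mul, integral_indicator_one (hCmeas J), measureReal_def]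
        congr 1
        rw [hC]
        rw [indep_miss μ q hq hsum X hXmeas hindep hdist J k]
        rw [ENNReal.toReal_ofReal]
        have hqJ_le : ∑ j ∈ J, q j ≤ 1 := by
          rw [← hsum]
          exact Finset.sum_le_sum_of_subset_of_nonneg (Finset.subset_univ J)
            (fun j _ _ => (hq j).le)
        exact pow_nonneg (by linarith) k

lemma null_miss {Ω : Type*} [MeasurableSpace Ω] (μ : Measure Ω) [IsProbabilityMeasure μ]
    {N : ℕ} (q : Fin N → ℝ) (hq : ∀ j, 0 < q j) (hsum : ∑ j, q j = 1)
    (X : ℕ → Ω → Fin N) (hXmeas : ∀ i, Measurable (X i))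
    (hindep : iIndepFun X μ)
    (hdist : ∀ i j, μ {ω | X i ω = j} = ENNReal.ofReal (q j)) :
    μ (⋂ m : ℕ, {ω | ∀ j, ∃ i < m, X i ω = j}ᶜ) = 0 := by
  have hqle : ∀ j, q j ≤ 1 := by
    intro j
    rw [← hsum]
    exact Finset.single_le_sum (fun j _ => (hq j).le) (Finset.mem_univ j)
  have hsub : ∀ m : ℕ, μ (⋂ m : ℕ, {ω | ∀ j, ∃ i < m, X i ω = j}ᶜ)
      ≤ ENNReal.ofReal (∑ j, (1 - q j) ^ m) := by
    intro m
    have h1 : (⋂ m : ℕ, {ω | ∀ j, ∃ i < m, X i ω = j}ᶜ)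
        ⊆ ⋃ j : Fin N, {ω | ∀ i < m, X i ω ∉ ({j} : Finset (Fin N))} := by
      intro ω hω
      have h2 : ω ∈ {ω | ∀ j, ∃ i < m, X i ω = j}ᶜ := Set.mem_iInter.mp hω m
      simp only [Set.mem_compl_iff, Set.mem_setOf_eq, not_forall] at h2
      obtain ⟨j, hj⟩ := h2
      push_neg at hj
      refine Set.mem_iUnion.mpr ⟨j, fun i hi hmem => ?_⟩
      exact hj i hi (Finset.mem_singleton.mp hmem)
    calc μ (⋂ m : ℕ, {ω | ∀ j, ∃ i < m, X i ω = j}ᶜ)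
        ≤ μ (⋃ j : Fin N, {ω | ∀ i < m, X i ω ∉ ({j} : Finset (Fin N))}) := measure_mono h1
      _ ≤ ∑ j : Fin N, μ {ω | ∀ i < m, X i ω ∉ ({j} : Finset (Fin N))} :=
          measure_iUnion_fintype_le _ _
      _ = ∑ j : Fin N, ENNReal.ofReal ((1 - q j) ^ m) := by
          refine Finset.sum_congr rfl fun j _ => ?_
          rw [indep_miss μ q hq hsum X hXmeas hindep hdist ({j} : Finset (Fin N)) m]
          rw [Finset.sum_singleton]
      _ = ENNReal.ofReal (∑ j, (1 - q j) ^ m) := by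
          rw [ENNReal.ofReal_sum_of_nonneg]
          intro j _
          exact pow_nonneg (by linarith [hq j, hqle j]) m
  have ha : ∀ m : ℕ, (μ (⋂ m : ℕ, {ω | ∀ j, ∃ i < m, X i ω = j}ᶜ)).toReal
      ≤ ∑ j, (1 - q j) ^ m := by
    intro m
    refine ENNReal.toReal_le_of_le_ofReal ?_ (hsub m)
    exact Finset.sum_nonneg fun j _ => pow_nonneg (by linarith [hqle j]) m
  have htend : Filter.Tendsto (fun m : ℕ => ∑ j, (1 - q j) ^ m) Filter.atTop (nhds 0) := by
    have : Filter.Tendsto (fun m : ℕ => ∑ j : Fin N, (1 - q j) ^ m) Filter.atTop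
        (nhds (∑ j : Fin N, (0:ℝ))) := by
      refine tendsto_finset_sum _ fun j _ => ?_
      exact tendsto_pow_atTop_nhds_zero_of_lt_one (by linarith [hqle j]) (by linarith [hq j])
    simpa using this
  have hle0 : (μ (⋂ m : ℕ, {ω | ∀ j, ∃ i < m, X i ω = j}ᶜ)).toReal ≤ 0 :=
    ge_of_tendsto' htend ha
  have h0 : (μ (⋂ m : ℕ, {ω | ∀ j, ∃ i < m, X i ω = j}ᶜ)).toReal = 0 :=
    le_antisymm hle0 ENNReal.toReal_nonneg
  rcases (ENNReal.toReal_eq_zero_iff _).mp h0 with h | h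
  · exact h
  · exact absurd h (measure_ne_top μ _)
theorem stmt_9 {Ω : Type*} [MeasurableSpace Ω] (μ : Measure Ω) [IsProbabilityMeasure μ]
    (N : ℕ) (hN : 0 < N) (q : Fin N → ℝ) (hq : ∀ j, 0 < q j)
    (hsum : ∑ j, q j = 1)
    (X : ℕ → Ω → Fin N) (hXmeas : ∀ i, Measurable (X i))
    (hindep : iIndepFun X μ)
    (hdist : ∀ i j, μ {ω | X i ω = j} = ENNReal.ofReal (q j))
    (S : Ω → ℕ) (hS : ∀ ω, S ω = sInf {n : ℕ | ∀ j, ∃ i < n, X i ω = j})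
    (r : ℝ) (hr : 0 < r) :
    ∫ ω, Real.Gamma ((S ω : ℝ) + r) / Real.Gamma (S ω) ∂μ
      = r * ∫ t in Set.Ioi (0:ℝ),
          t ^ (r - 1) * (1 - ∏ j, (1 - Real.exp (-q j * t))) := by
  classical
  have hqle : ∀ j, q j ≤ 1 := by
    intro j
    rw [← hsum]
    exact Finset.single_le_sum (fun j _ => (hq j).le) (Finset.mem_univ j)
  -- the events E m
  set E : ℕ → Set Ω := fun m => {ω | ∀ j, ∃ i < m, X i ω = j} with hE
  have hEmeas : ∀ m, MeasurableSet (E m) := by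
    intro m
    have : E m = ⋂ j, ⋃ i ∈ Finset.range m, X i ⁻¹' {j} := by
      ext ω; simp [hE, Set.mem_setOf_eq]
    rw [this]
    exact MeasurableSet.iInter fun j =>
      Finset.measurableSet_biUnion _ fun i _ => (hXmeas i) (measurableSet_singleton j)
  set Z : Set Ω := ⋂ m, (E m)ᶜ with hZdef
  have hZmeas : MeasurableSet Z := MeasurableSet.iInter fun m => (hEmeas m).compl
  have hZ0 : μ Z = 0 := null_miss μ q hq hsum X hXmeas hindep hdist
  have hmonoE : ∀ {m n : ℕ}, m ≤ n → E m ⊆ E n := by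
    intro m n hmn ω hω j
    obtain ⟨i, hi, hx⟩ := hω j
    exact ⟨i, lt_of_lt_of_le hi hmn, hx⟩
  have hSle : ∀ n, {ω | S ω ≤ n} = E n ∪ Z := by
    intro n
    ext ω
    simp only [Set.mem_setOf_eq, Set.mem_union, hS ω]
    constructor
    · intro h
      by_cases hne : {m : ℕ | ∀ j, ∃ i < m, X i ω = j}.Nonempty
      · left
        have hmem := Nat.sInf_mem hne
        exact hmonoE h hmem
      · right
        rw [Set.not_nonempty_iff_eq_empty] at hne
        refine Set.mem_iInter.mpr fun m => ?_
        intro hm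
        exact Set.eq_empty_iff_forall_notMem.mp hne m hm
    · rintro (h | h)
      · exact Nat.sInf_le h
      · have hemp : {m : ℕ | ∀ j, ∃ i < m, X i ω = j} = ∅ := by
          rw [Set.eq_empty_iff_forall_notMem]
          intro m hm
          exact (Set.mem_iInter.mp h m) hm
        rw [hemp, Nat.sInf_empty]
        exact Nat.zero_le n
  have hSleMeas : ∀ n, MeasurableSet {ω | S ω ≤ n} := by
    intro n; rw [hSle n]; exact (hEmeas n).union hZmeas
  have hSeqMeas : ∀ n : ℕ, MeasurableSet {ω | S ω = n} := by
    intro n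
    match n with
    | 0 =>
      have h0 : {ω | S ω = 0} = {ω | S ω ≤ 0} := by ext ω; simp [Nat.le_zero]
      rw [h0]; exact hSleMeas 0
    | Nat.succ m =>
      have h0 : {ω | S ω = m + 1} = {ω | S ω ≤ m + 1} ∩ ({ω | S ω ≤ m})ᶜ := by
        ext ω
        simp only [Set.mem_inter_iff, Set.mem_setOf_eq, Set.mem_compl_iff, not_le]
        omega
      rw [h0]; exact (hSleMeas (m+1)).inter (hSleMeas m).compl
  have hSmeas : Measurable S := measurable_to_countable' fun n => hSeqMeas n
  -- inclusion-exclusion quantities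
  set D : ℕ → ℝ := fun k => ∑ J ∈ (Finset.univ : Finset (Fin N)).powerset,
      (-1) ^ J.card * (1 - ∑ j ∈ J, q j) ^ k with hD
  have hDk : ∀ k, (μ (E k)).toReal = D k := fun k =>
    meas_E μ q hq hsum X hXmeas hindep hdist k
  have hEk : ∀ k, μ (E k) = ENNReal.ofReal (D k) := by
    intro k
    rw [← hDk k, ENNReal.ofReal_toReal (measure_ne_top μ _)]
  have hD_nonneg : ∀ k, 0 ≤ D k := fun k => (hDk k) ▸ ENNReal.toReal_nonneg
  have hD_le_one : ∀ k, D k ≤ 1 := by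
    intro k
    rw [← hDk k]
    exact ENNReal.toReal_le_of_le_ofReal zero_le_one (by simpa using prob_le_one (μ := μ) (s := E k))
  set p : ℕ → ℝ := fun k => 1 - D k with hp
  have hp_nonneg : ∀ k, 0 ≤ p k := fun k => by
    simp only [hp]; linarith [hD_le_one k]
  have hp_le_one : ∀ k, p k ≤ 1 := fun k => by
    simp only [hp]; linarith [hD_nonneg k]
  have hgt : ∀ k, μ {ω | k < S ω} = ENNReal.ofReal (p k) := by
    intro k
    have hcompl : {ω | k < S ω} = ({ω | S ω ≤ k})ᶜ := by
      ext ω; simp [Set.mem_setOf_eq, not_le]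
    have hmE : μ {ω | S ω ≤ k} = ENNReal.ofReal (D k) := by
      rw [hSle k, ← hEk k]
      refine le_antisymm ?_ (measure_mono Set.subset_union_left)
      calc μ (E k ∪ Z) ≤ μ (E k) + μ Z := measure_union_le _ _
        _ = μ (E k) := by rw [hZ0, add_zero]
    rw [hcompl, measure_compl (hSleMeas k) (measure_ne_top μ _), measure_univ, hmE]
    rw [← ENNReal.ofReal_one, ← ENNReal.ofReal_sub _ (hD_nonneg k)]
  -- the coefficients c
  set c : ℕ → ℝ := fun k => Real.Gamma (r + k) / (Nat.factorial k) with hc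
  have hc_pos : ∀ k, 0 < c k := by
    intro k
    apply div_pos (Real.Gamma_pos_of_pos (by positivity))
    exact_mod_cast Nat.factorial_pos k
  -- pointwise Poissonization identity
  have hptwise : ∀ t : ℝ,
      HasSum (fun k : ℕ => p k * (Real.exp (-t) * (t ^ k / Nat.factorial k)))
        (1 - ∏ j, (1 - Real.exp (-q j * t))) := by
    intro t
    have hw : HasSum (fun k : ℕ => Real.exp (-t) * (t ^ k / Nat.factorial k)) 1 := by
      have h := (exp_hasSum t).mul_left (Real.exp (-t))
      rwa [← Real.exp_add, neg_add_cancel, Real.exp_zero] at h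
    have hJ : ∀ J : Finset (Fin N),
        HasSum (fun k : ℕ => (-1:ℝ) ^ J.card *
            ((1 - ∑ j ∈ J, q j) ^ k * (Real.exp (-t) * (t ^ k / Nat.factorial k))))
          ((-1:ℝ) ^ J.card * Real.exp (-(∑ j ∈ J, q j) * t)) := by
      intro J
      have h0 := (exp_hasSum ((1 - ∑ j ∈ J, q j) * t)).mul_left (Real.exp (-t))
      have h1 : (fun k : ℕ => Real.exp (-t) * (((1 - ∑ j ∈ J, q j) * t) ^ k / Nat.factorial k))
          = fun k : ℕ => (1 - ∑ j ∈ J, q j) ^ k * (Real.exp (-t) * (t ^ k / Nat.factorial k)) := by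
        funext k; rw [mul_pow]; ring
      rw [h1] at h0
      have h2 : Real.exp (-t) * Real.exp ((1 - ∑ j ∈ J, q j) * t)
          = Real.exp (-(∑ j ∈ J, q j) * t) := by
        rw [← Real.exp_add]; congr 1; ring
      rw [h2] at h0
      exact h0.mul_left _
    have hDsum : HasSum (fun k : ℕ => D k * (Real.exp (-t) * (t ^ k / Nat.factorial k)))
        (∑ J ∈ (Finset.univ : Finset (Fin N)).powerset,
          (-1:ℝ) ^ J.card * Real.exp (-(∑ j ∈ J, q j) * t)) := by
      have h := hasSum_sum (s := (Finset.univ : Finset (Fin N)).powerset)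
          (f := fun (J : Finset (Fin N)) (k : ℕ) => (-1:ℝ) ^ J.card *
            ((1 - ∑ j ∈ J, q j) ^ k * (Real.exp (-t) * (t ^ k / Nat.factorial k))))
          (fun J _ => hJ J)
      convert h using 1
      funext k
      rw [hD, Finset.sum_mul]
      exact Finset.sum_congr rfl fun J _ => by ring
    have hfinal := hw.sub hDsum
    have hterm : (fun k : ℕ => Real.exp (-t) * (t ^ k / Nat.factorial k)
        - D k * (Real.exp (-t) * (t ^ k / Nat.factorial k)))
        = fun k : ℕ => p k * (Real.exp (-t) * (t ^ k / Nat.factorial k)) := by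
      funext k; simp only [hp]; ring
    rw [hterm] at hfinal
    have hprodJ : ∀ J : Finset (Fin N),
        ∏ j ∈ J, Real.exp (-q j * t) = Real.exp (-(∑ j ∈ J, q j) * t) := by
      intro J
      rw [← Real.exp_sum]
      congr 1
      rw [neg_mul, ← Finset.sum_mul]
      simp [neg_mul]
    have hval : (1:ℝ) - ∑ J ∈ (Finset.univ : Finset (Fin N)).powerset,
        (-1:ℝ) ^ J.card * Real.exp (-(∑ j ∈ J, q j) * t)
        = 1 - ∏ j, (1 - Real.exp (-q j * t)) := by
      congr 1
      rw [prod_one_sub_expand (fun j => Real.exp (-q j * t))]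
      exact Finset.sum_congr rfl fun J _ => by rw [hprodJ J]
    rw [← hval]
    exact hfinal
  -- the common value T
  set T : ENNReal := ∑' k : ℕ, ENNReal.ofReal (c k * p k) with hT
  -- RHS lintegral computation
  have hRpoint : ∀ t ∈ Set.Ioi (0:ℝ),
      ENNReal.ofReal (t ^ (r - 1) * (1 - ∏ j, (1 - Real.exp (-q j * t))))
        = ∑' k : ℕ, ENNReal.ofReal ((p k / Nat.factorial k) * (Real.exp (-t) * t ^ ((r + k) - 1))) := by
    intro t ht
    rw [Set.mem_Ioi] at ht
    have hs := (hptwise t).mul_left (t ^ (r - 1))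
    have hterm : (fun k : ℕ => t ^ (r - 1) * (p k * (Real.exp (-t) * (t ^ k / Nat.factorial k))))
        = fun k : ℕ => (p k / Nat.factorial k) * (Real.exp (-t) * t ^ ((r + k) - 1)) := by
      funext k
      have hrpow : t ^ ((r + (k:ℕ)) - 1) = t ^ (r - 1) * (t:ℝ) ^ (k:ℕ) := by
        rw [show (r + (k:ℕ) : ℝ) - 1 = (r - 1) + (k:ℕ) by ring, Real.rpow_add ht,
          Real.rpow_natCast]
      rw [hrpow]; ring
    rw [hterm] at hs
    rw [← hs.tsum_eq]
    rw [ENNReal.ofReal_tsum_of_nonneg ?_ hs.summable]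
    intro k
    have h1 : (0:ℝ) ≤ p k / Nat.factorial k := div_nonneg (hp_nonneg k) (Nat.cast_nonneg _)
    have h2 : (0:ℝ) ≤ Real.exp (-t) * t ^ ((r + k) - 1) :=
      mul_nonneg (Real.exp_pos _).le (Real.rpow_nonneg ht.le _)
    exact mul_nonneg h1 h2
  have hR : (∫⁻ t in Set.Ioi (0:ℝ),
      ENNReal.ofReal (t ^ (r - 1) * (1 - ∏ j, (1 - Real.exp (-q j * t))))) = T := by
    rw [setLIntegral_congr_fun measurableSet_Ioi hRpoint]
    rw [lintegral_tsum ?_]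
    · refine tsum_congr fun k => ?_
      have hmul : ∀ t : ℝ, ENNReal.ofReal ((p k / Nat.factorial k) * (Real.exp (-t) * t ^ ((r + k) - 1)))
          = ENNReal.ofReal (p k / Nat.factorial k) * ENNReal.ofReal (Real.exp (-t) * t ^ ((r + k) - 1)) := by
        intro t
        rw [ENNReal.ofReal_mul (div_nonneg (hp_nonneg k) (Nat.cast_nonneg _))]
      simp_rw [hmul]
      rw [lintegral_const_mul' _ _ ENNReal.ofReal_ne_top]
      rw [gamma_lintegral (by positivity : (0:ℝ) < r + k)]
      rw [← ENNReal.ofReal_mul (div_nonneg (hp_nonneg k) (Nat.cast_nonneg _))]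
      congr 1
      rw [hc]
      field_simp
    · intro k
      apply Measurable.aemeasurable
      apply ENNReal.measurable_ofReal.comp
      apply Measurable.const_mul
      exact (measurable_id.neg.exp).mul (measurable_id.pow_const ((r + k) - 1))
  -- LHS lintegral computation
  set f : ℕ → ℝ := fun n => Real.Gamma (n + r) / Real.Gamma n with hf
  have hL : (∫⁻ ω, ENNReal.ofReal (f (S ω)) ∂μ) = ENNReal.ofReal r * T := by
    have h1 : ∀ ω, ENNReal.ofReal (f (S ω))
        = ∑' n : ℕ, Set.indicator {ω' | S ω' = n} (fun _ => ENNReal.ofReal (f n)) ω := by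
      intro ω
      rw [tsum_eq_single (S ω) ?_]
      · simp [Set.indicator_apply]
      · intro n hn
        rw [Set.indicator_apply, if_neg]
        simp only [Set.mem_setOf_eq]
        exact fun h => hn (h ▸ rfl)
    calc (∫⁻ ω, ENNReal.ofReal (f (S ω)) ∂μ)
        = ∫⁻ ω, ∑' n : ℕ, Set.indicator {ω' | S ω' = n} (fun _ => ENNReal.ofReal (f n)) ω ∂μ :=
          lintegral_congr h1
      _ = ∑' n : ℕ, ∫⁻ ω, Set.indicator {ω' | S ω' = n} (fun _ => ENNReal.ofReal (f n)) ω ∂μ :=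
          lintegral_tsum fun n => ((measurable_const).indicator (hSeqMeas n)).aemeasurable
      _ = ∑' n : ℕ, ENNReal.ofReal (f n) * μ {ω' | S ω' = n} := by
          refine tsum_congr fun n => ?_
          rw [lintegral_indicator_const (hSeqMeas n)]
      _ = ∑' n : ℕ, ∑' k : ℕ, (if k < n then ENNReal.ofReal (r * c k) * μ {ω' | S ω' = n} else 0) := by
          refine tsum_congr fun n => ?_
          have hfn : ENNReal.ofReal (f n) = ∑ k ∈ Finset.range n, ENNReal.ofReal (r * c k) := by
            have : f n = r * ∑ k ∈ Finset.range n, c k := gamma_ratio r hr n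
            rw [this, Finset.mul_sum, ENNReal.ofReal_sum_of_nonneg
              (fun k _ => mul_nonneg hr.le (hc_pos k).le)]
          rw [hfn, Finset.sum_mul]
          rw [tsum_eq_sum (s := Finset.range n) ?_]
          · refine Finset.sum_congr rfl fun k hk => ?_
            rw [if_pos (Finset.mem_range.mp hk)]
          · intro k hk
            rw [if_neg (fun h => hk (Finset.mem_range.mpr h))]
      _ = ∑' k : ℕ, ∑' n : ℕ, (if k < n then ENNReal.ofReal (r * c k) * μ {ω' | S ω' = n} else 0) :=
          ENNReal.tsum_comm
      _ = ∑' k : ℕ, ENNReal.ofReal (r * c k) * μ {ω | k < S ω} := by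
          refine tsum_congr fun k => ?_
          have h2 : ∀ n : ℕ, (if k < n then ENNReal.ofReal (r * c k) * μ {ω' | S ω' = n} else 0)
              = ENNReal.ofReal (r * c k) * (if k < n then μ {ω' | S ω' = n} else 0) := by
            intro n; split <;> simp
          simp_rw [h2]
          rw [ENNReal.tsum_mul_left]
          congr 1
          have h3 : ∀ n : ℕ, (if k < n then μ {ω' | S ω' = n} else 0)
              = μ (if k < n then {ω' | S ω' = n} else ∅) := by
            intro n; split <;> simp
          simp_rw [h3]
          rw [← measure_iUnion ?_ ?_]
          · congr 1
            ext ω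
            simp only [Set.mem_iUnion, Set.mem_setOf_eq]
            constructor
            · rintro ⟨n, hn⟩
              by_cases h : k < n
              · rw [if_pos h] at hn
                exact hn ▸ h
              · rw [if_neg h] at hn
                exact absurd hn (Set.notMem_empty ω)
            · intro h
              exact ⟨S ω, by rw [if_pos h]; exact rfl⟩
          · intro m n hmn
            simp only [Function.onFun, Set.disjoint_left]
            intro ω hm hn
            apply hmn
            by_cases h1 : k < m
            · by_cases h2 : k < n
              · rw [if_pos h1] at hm; rw [if_pos h2] at hn
                exact hm.symm.trans hn
              · rw [if_neg h2] at hn; exact absurd hn (Set.notMem_empty ω)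
            · rw [if_neg h1] at hm; exact absurd hm (Set.notMem_empty ω)
          · intro n
            split
            · exact hSeqMeas n
            · exact MeasurableSet.empty
      _ = ∑' k : ℕ, ENNReal.ofReal r * ENNReal.ofReal (c k * p k) := by
          refine tsum_congr fun k => ?_
          rw [hgt k, ← ENNReal.ofReal_mul (by positivity : (0:ℝ) ≤ r * c k),
            ← ENNReal.ofReal_mul hr.le]
          congr 1
          ring
      _ = ENNReal.ofReal r * T := ENNReal.tsum_mul_left
  -- final assembly
  have hGmeas : Measurable fun t : ℝ => t ^ (r - 1) * (1 - ∏ j, (1 - Real.exp (-q j * t))) := by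
    apply Measurable.mul
    · exact measurable_id.pow_const (r - 1)
    · apply Measurable.const_sub
      apply Finset.measurable_prod
      intro j _
      apply Measurable.const_sub
      exact ((measurable_id.const_mul (-q j)).exp)
  have hGnn : 0 ≤ᵐ[volume.restrict (Set.Ioi (0:ℝ))]
      fun t => t ^ (r - 1) * (1 - ∏ j, (1 - Real.exp (-q j * t))) := by
    refine (ae_restrict_iff' measurableSet_Ioi).mpr (ae_of_all _ fun t ht => ?_)
    rw [Set.mem_Ioi] at ht
    have h1 : ∏ j, (1 - Real.exp (-q j * t)) ≤ 1 := by
      apply Finset.prod_le_one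
      · intro j _
        have : Real.exp (-q j * t) ≤ 1 := by
          rw [← Real.exp_zero]
          exact Real.exp_le_exp.mpr (by nlinarith [hq j])
        linarith
      · intro j _
        linarith [Real.exp_pos (-q j * t)]
    exact mul_nonneg (Real.rpow_nonneg ht.le _) (by linarith)
  have hLnn : 0 ≤ᵐ[μ] fun ω => Real.Gamma ((S ω : ℝ) + r) / Real.Gamma (S ω) := by
    refine ae_of_all _ fun ω => ?_
    exact div_nonneg (Real.Gamma_nonneg_of_nonneg (by positivity))
      (Real.Gamma_nonneg_of_nonneg (Nat.cast_nonneg _))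
  have hLmeas : AEStronglyMeasurable (fun ω => Real.Gamma ((S ω : ℝ) + r) / Real.Gamma (S ω)) μ :=
    ((measurable_from_top (f := fun n : ℕ => Real.Gamma ((n : ℝ) + r) / Real.Gamma (n : ℝ))).comp
      hSmeas).aestronglyMeasurable
  rw [integral_eq_lintegral_of_nonneg_ae hLnn hLmeas]
  rw [integral_eq_lintegral_of_nonneg_ae hGnn (hGmeas.aestronglyMeasurable)]
  have hLeq : (∫⁻ ω, ENNReal.ofReal (Real.Gamma ((S ω : ℝ) + r) / Real.Gamma (S ω)) ∂μ)
      = ENNReal.ofReal r * T := hL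
  rw [hLeq, hR, ENNReal.toReal_mul, ENNReal.toReal_ofReal hr.le]
end

section
/- Let S_N be the coupon collector waiting time with coupon probabilities q_1,...,q_N > 0 summing to 1. Then E[S_N (S_N + 1)] = 2 ∫_0^∞ t [1 − ∏_{j=1}^N (1 − e^{−q_j t})] dt. -/
open MeasureTheory Real ProbabilityTheory
open scoped ENNReal

private lemma gauss_aux (s : ℕ) : ∑ n ∈ Finset.range s, 2 * (n + 1) = s * (s + 1) := by
  induction s with
  | zero => simp
  | succ k ih => rw [Finset.sum_range_succ, ih]; ring

private lemma summable_aux {r : ℝ} (h0 : 0 ≤ r) (h1 : r < 1) :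
    Summable (fun n : ℕ => ((n : ℝ) + 1) * r ^ n) := by
  have hn : ‖r‖ < 1 := by rwa [Real.norm_of_nonneg h0]
  have h2 := summable_pow_mul_geometric_of_norm_lt_one (R := ℝ) 1 hn
  simp only [pow_one] at h2
  have h3 := h2.add (summable_geometric_of_lt_one h0 h1)
  convert h3 using 2 with n
  case e'_5 => ring
  rfl

private lemma tsum_aux {r : ℝ} (h0 : 0 ≤ r) (h1 : r < 1) :
    ∑' n : ℕ, ((n : ℝ) + 1) * r ^ n = (1 / (1 - r)) ^ 2 := by
  have hn : ‖r‖ < 1 := by rwa [Real.norm_of_nonneg h0]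
  have h2 := summable_pow_mul_geometric_of_norm_lt_one (R := ℝ) 1 hn
  simp only [pow_one] at h2
  have hg := summable_geometric_of_lt_one h0 h1
  have hc : ∀ n : ℕ, ((n : ℝ) + 1) * r ^ n = (n : ℝ) * r ^ n + r ^ n := fun n => by ring
  rw [tsum_congr hc, Summable.tsum_add h2 hg, tsum_coe_mul_geometric_of_norm_lt_one hn,
    tsum_geometric_of_lt_one h0 h1]
  have hr : (1 : ℝ) - r ≠ 0 := by linarith
  field_simp
  ring

theorem stmt_11 {Ω : Type*} [MeasurableSpace Ω] (μ : Measure Ω) [IsProbabilityMeasure μ]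
    (N : ℕ) (hN : 0 < N) (q : Fin N → ℝ) (hq : ∀ j, 0 < q j)
    (hsum : ∑ j, q j = 1)
    (X : ℕ → Ω → Fin N) (hXmeas : ∀ i, Measurable (X i))
    (hindep : iIndepFun X μ)
    (hdist : ∀ i j, μ {ω | X i ω = j} = ENNReal.ofReal (q j))
    (S : Ω → ℕ) (hS : ∀ ω, S ω = sInf {n : ℕ | ∀ j, ∃ i < n, X i ω = j}) :
    ∫ ω, (S ω : ℝ) * ((S ω : ℝ) + 1) ∂μ
      = 2 * ∫ t in Set.Ioi (0:ℝ), t * (1 - ∏ j, (1 - Real.exp (-q j * t))) := by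
  classical
  set Q : Finset (Fin N) → ℝ := fun J => ∑ j ∈ J, q j with hQdef
  set PS : Finset (Finset (Fin N)) := Finset.univ.powerset.erase ∅ with hPS
  set C : Finset (Fin N) → ℕ → Set Ω :=
    fun J n => ⋂ i ∈ Finset.range n, X i ⁻¹' ((↑J : Set (Fin N))ᶜ) with hCdef
  set U : ℕ → Set Ω := fun n => ⋃ j, C {j} n with hUdef
  set E : Set Ω := ⋂ n, U n with hEdef
  -- basic facts about Q
  have hQ0 : ∀ J, 0 ≤ Q J := fun J => Finset.sum_nonneg fun j _ => (hq j).le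
  have hQ1 : ∀ J, Q J ≤ 1 := by
    intro J
    rw [← hsum]
    exact Finset.sum_le_sum_of_subset_of_nonneg (Finset.subset_univ J) fun j _ _ => (hq j).le
  have hQpos : ∀ J ∈ PS, 0 < Q J := by
    intro J hJ
    have hne : J.Nonempty :=
      Finset.nonempty_of_ne_empty (Finset.ne_of_mem_erase hJ)
    exact Finset.sum_pos (fun j _ => hq j) hne
  have hr0 : ∀ J : Finset (Fin N), (0:ℝ) ≤ 1 - Q J := fun J => by linarith [hQ1 J]
  have hrlt : ∀ J ∈ PS, (1:ℝ) - Q J < 1 := fun J hJ => by linarith [hQpos J hJ]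
  have hqle1 : ∀ j, q j ≤ 1 := fun j =>
    hsum ▸ Finset.single_le_sum (fun k _ => (hq k).le) (Finset.mem_univ j)
  -- membership in C
  have hCmem : ∀ (J : Finset (Fin N)) (n : ℕ) (ω : Ω), ω ∈ C J n ↔ ∀ i < n, X i ω ∉ J := by
    intro J n ω
    simp [hCdef]
  have hCmeas : ∀ (J : Finset (Fin N)) (n : ℕ), MeasurableSet (C J n) := by
    intro J n
    rw [hCdef]
    exact MeasurableSet.biInter (Finset.range n).countable_toSet
      (fun i _ => (hXmeas i) (by measurability))
  have hUmeas : ∀ n, MeasurableSet (U n) := by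
    intro n
    rw [hUdef]
    exact MeasurableSet.iUnion fun j => hCmeas _ n
  have hEmeas : MeasurableSet E := by
    rw [hEdef]; exact MeasurableSet.iInter fun n => hUmeas n
  -- measure of C
  have hμC : ∀ (J : Finset (Fin N)) (n : ℕ), μ (C J n) = ENNReal.ofReal ((1 - Q J) ^ n) := by
    intro J n
    have hpre : ∀ i : ℕ, μ (X i ⁻¹' ((↑J : Set (Fin N))ᶜ)) = ENNReal.ofReal (1 - Q J) := by
      intro i
      have h1 : X i ⁻¹' (↑J : Set (Fin N)) = ⋃ j ∈ J, {ω | X i ω = j} := by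
        ext ω; simp [Set.mem_iUnion]
      have h2 : μ (X i ⁻¹' (↑J : Set (Fin N))) = ENNReal.ofReal (Q J) := by
        rw [h1, measure_biUnion_finset ?disj ?meas]
        case disj =>
          intro a _ b _ hab
          refine Set.disjoint_left.2 fun ω ha hb => hab ?_
          have h3 : X i ω = a := ha
          have h4 : X i ω = b := hb
          rw [← h3, h4]
        case meas =>
          intro b _
          exact (hXmeas i) (measurableSet_singleton b)
        simp_rw [hdist i]
        simp only [hQdef]
        exact (ENNReal.ofReal_sum_of_nonneg fun j _ => (hq j).le).symm
      rw [Set.preimage_compl, prob_compl_eq_one_sub ((hXmeas i) (by measurability)), h2,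
        show (1:ℝ≥0∞) - ENNReal.ofReal (Q J) = ENNReal.ofReal (1 - Q J) by
          rw [ENNReal.ofReal_sub 1 (hQ0 J), ENNReal.ofReal_one]]
    calc μ (C J n) = ∏ i ∈ Finset.range n, μ (X i ⁻¹' ((↑J : Set (Fin N))ᶜ)) := by
          rw [hCdef]
          exact hindep.meas_biInter fun i _ => ⟨(↑J : Set (Fin N))ᶜ, by measurability, rfl⟩
      _ = ENNReal.ofReal ((1 - Q J) ^ n) := by
          simp_rw [hpre]
          rw [Finset.prod_const, Finset.card_range, ← ENNReal.ofReal_pow (hr0 J)]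
  -- inclusion-exclusion key algebraic identity
  have hkey : ∀ y : Finset (Fin N) → ℝ, y ∅ = 1 →
      1 - ∑ J ∈ Finset.univ.powerset, (-1:ℝ) ^ J.card * y J
        = ∑ J ∈ PS, (-1:ℝ) ^ (J.card + 1) * y J := by
    intro y hy
    rw [hPS, ← Finset.add_sum_erase _ (fun J => (-1:ℝ) ^ J.card * y J)
      (Finset.empty_mem_powerset _)]
    simp only [Finset.card_empty, pow_zero, hy, one_mul]
    have h1 : ∀ J : Finset (Fin N), (-1:ℝ) ^ (J.card + 1) * y J = -((-1:ℝ) ^ J.card * y J) :=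
      fun J => by ring
    rw [Finset.sum_congr rfl fun J _ => h1 J, Finset.sum_neg_distrib]
    ring
  -- product of indicators
  have hprodind : ∀ (n : ℕ) (ω : Ω) (J : Finset (Fin N)),
      (∏ j ∈ J, Set.indicator (C {j} n) (fun _ => (1:ℝ)) ω)
        = Set.indicator (C J n) (fun _ => (1:ℝ)) ω := by
    intro n ω J
    by_cases h : ω ∈ C J n
    · rw [Set.indicator_of_mem h]
      refine Finset.prod_eq_one fun j hj => ?_
      rw [Set.indicator_of_mem]
      refine (hCmem _ n ω).2 fun i hi => ?_
      simp only [Finset.mem_singleton]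
      intro he
      exact (hCmem J n ω).1 h i hi (he ▸ hj)
    · rw [Set.indicator_of_notMem h]
      rw [hCmem] at h
      push_neg at h
      obtain ⟨i, hi, hmem⟩ := h
      refine Finset.prod_eq_zero hmem ?_
      rw [Set.indicator_of_notMem]
      intro hc
      exact (hCmem _ n ω).1 hc i hi (Finset.mem_singleton_self _)
  -- indicator expansion
  have hindU : ∀ (n : ℕ) (ω : Ω), Set.indicator (U n) (fun _ => (1:ℝ)) ω
      = ∑ J ∈ PS, (-1:ℝ) ^ (J.card + 1) * Set.indicator (C J n) (fun _ => (1:ℝ)) ω := by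
    intro n ω
    have hexp : (∏ j : Fin N, ((1:ℝ) - Set.indicator (C {j} n) (fun _ => (1:ℝ)) ω))
        = ∑ J ∈ Finset.univ.powerset,
            (-1:ℝ) ^ J.card * Set.indicator (C J n) (fun _ => (1:ℝ)) ω := by
      have hx : ∀ j : Fin N, (1:ℝ) - Set.indicator (C {j} n) (fun _ => (1:ℝ)) ω
          = -Set.indicator (C {j} n) (fun _ => (1:ℝ)) ω + 1 := fun j => by ring
      simp_rw [hx]
      rw [Finset.prod_add]
      refine Finset.sum_congr rfl fun J hJ => ?_
      rw [Finset.prod_const_one, mul_one]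
      have h5 : ∀ j ∈ J, -Set.indicator (C {j} n) (fun _ => (1:ℝ)) ω
          = (-1) * Set.indicator (C {j} n) (fun _ => (1:ℝ)) ω := fun j _ => by ring
      rw [Finset.prod_congr rfl h5, Finset.prod_mul_distrib, Finset.prod_const, hprodind n ω J]
    have hCempty : ω ∈ C (∅ : Finset (Fin N)) n :=
      (hCmem ∅ n ω).2 fun i _ => Finset.notMem_empty _
    rw [← hkey (fun J => Set.indicator (C J n) (fun _ => (1:ℝ)) ω)
      (Set.indicator_of_mem hCempty _), ← hexp]
    by_cases hω : ω ∈ U n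
    · rw [Set.indicator_of_mem hω]
      have hω' : ∃ j, ω ∈ C {j} n := by
        rw [hUdef] at hω; exact Set.mem_iUnion.1 hω
      obtain ⟨j, hj⟩ := hω'
      rw [Finset.prod_eq_zero (Finset.mem_univ j)
        (by rw [Set.indicator_of_mem hj]; ring)]
      ring
    · rw [Set.indicator_of_notMem hω,
        Finset.prod_eq_one fun j _ => by
          rw [Set.indicator_of_notMem fun hc => hω (by rw [hUdef]; exact Set.mem_iUnion.2 ⟨j, hc⟩)]
          ring]
      ring
  -- the probability p n
  set p : ℕ → ℝ := fun n => ∑ J ∈ PS, (-1:ℝ) ^ (J.card + 1) * (1 - Q J) ^ n with hpdef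
  have hintC : ∀ (J : Finset (Fin N)) (n : ℕ),
      ∫ ω, Set.indicator (C J n) (fun _ => (1:ℝ)) ω ∂μ = (1 - Q J) ^ n := by
    intro J n
    rw [integral_indicator (hCmeas J n), setIntegral_const, smul_eq_mul, mul_one, measureReal_def, hμC,
      ENNReal.toReal_ofReal (pow_nonneg (hr0 J) n)]
  have hptoReal : ∀ n, (μ (U n)).toReal = p n := by
    intro n
    have hint : ∫ ω, Set.indicator (U n) (fun _ => (1:ℝ)) ω ∂μ = p n := by
      rw [show (fun ω => Set.indicator (U n) (fun _ => (1:ℝ)) ω)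
          = fun ω => ∑ J ∈ PS, (-1:ℝ) ^ (J.card + 1) * Set.indicator (C J n) (fun _ => (1:ℝ)) ω
          from funext (hindU n)]
      rw [integral_finset_sum _
        (fun J _ => (((integrable_const (1:ℝ)).indicator (hCmeas J n)).const_mul _))]
      simp_rw [integral_const_mul, hintC]
      rfl
    have hU' : ∫ ω, Set.indicator (U n) (fun _ => (1:ℝ)) ω ∂μ = (μ (U n)).toReal := by
      rw [integral_indicator (hUmeas n), setIntegral_const, smul_eq_mul, mul_one, measureReal_def]
    rw [← hU', hint]
  have hμU : ∀ n, μ (U n) = ENNReal.ofReal (p n) := by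
    intro n
    rw [← hptoReal n, ENNReal.ofReal_toReal (measure_ne_top μ (U n))]
  have hpnonneg : ∀ n, 0 ≤ p n := fun n => (hptoReal n) ▸ ENNReal.toReal_nonneg
  -- μ E = 0
  have hμE : μ E = 0 := by
    have hle : ∀ n, (μ E).toReal ≤ ∑ j, (1 - q j) ^ n := by
      intro n
      have h1 : μ E ≤ μ (U n) := measure_mono (by rw [hEdef]; exact Set.iInter_subset _ n)
      have h2 : μ (U n) ≤ ENNReal.ofReal (∑ j, (1 - q j) ^ n) := by
        rw [hUdef]
        refine le_trans (measure_iUnion_le _) ?_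
        rw [tsum_fintype, ENNReal.ofReal_sum_of_nonneg
          (fun j _ => pow_nonneg (by linarith [hqle1 j]) n)]
        refine Finset.sum_le_sum fun j _ => ?_
        rw [hμC]
        have : Q {j} = q j := by rw [hQdef]; simp
        rw [this]
      exact ENNReal.toReal_le_of_le_ofReal
        (Finset.sum_nonneg fun j _ => pow_nonneg (by linarith [hqle1 j]) n) (h1.trans h2)
    have htend : Filter.Tendsto (fun n => ∑ j, (1 - q j) ^ n) Filter.atTop (nhds 0) := by
      have h := tendsto_finset_sum (Finset.univ : Finset (Fin N))
        (fun j _ => tendsto_pow_atTop_nhds_zero_of_lt_one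
          (by linarith [hqle1 j] : (0:ℝ) ≤ 1 - q j) (by linarith [hq j]))
      simpa using h
    have h0 : (μ E).toReal ≤ 0 := ge_of_tendsto' htend hle
    have h1 : (μ E).toReal = 0 := le_antisymm h0 ENNReal.toReal_nonneg
    rcases (ENNReal.toReal_eq_zero_iff _).1 h1 with h | h
    · exact h
    · exact absurd h (measure_ne_top μ E)
  -- characterization of {S > n}
  have hmono : ∀ (ω : Ω) (m m' : ℕ), m ≤ m' → (∀ j, ∃ i < m, X i ω = j)
      → ∀ j, ∃ i < m', X i ω = j := by
    intro ω m m' hmm h j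
    obtain ⟨i, hi, he⟩ := h j
    exact ⟨i, lt_of_lt_of_le hi hmm, he⟩
  have hUiff : ∀ (n : ℕ) (ω : Ω), ω ∈ U n ↔ ¬ ∀ j, ∃ i < n, X i ω = j := by
    intro n ω
    rw [hUdef]
    simp only [Set.mem_iUnion]
    constructor
    · rintro ⟨j, hj⟩ hall
      obtain ⟨i, hi, he⟩ := hall j
      exact (hCmem _ n ω).1 hj i hi (by simp [he])
    · intro h
      push_neg at h
      obtain ⟨j, hj⟩ := h
      exact ⟨j, (hCmem _ n ω).2 fun i hi => by
        simp only [Finset.mem_singleton]; exact hj i hi⟩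
  have hSgt : ∀ (n : ℕ) (ω : Ω), n < S ω ↔ ω ∈ U n \ E := by
    intro n ω
    rw [hS ω]
    constructor
    · intro h
      have hne : {m : ℕ | ∀ j, ∃ i < m, X i ω = j}.Nonempty := by
        by_contra hc
        rw [Set.not_nonempty_iff_eq_empty] at hc
        rw [hc, Nat.sInf_empty] at h
        omega
      refine ⟨(hUiff n ω).2 fun hmem => absurd
        (Nat.sInf_le (show n ∈ {m : ℕ | ∀ j, ∃ i < m, X i ω = j} from hmem)) (by omega), ?_⟩
      rw [hEdef]
      intro hE
      obtain ⟨m, hm⟩ := hne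
      exact (hUiff m ω).1 (Set.mem_iInter.1 hE m) hm
    · rintro ⟨hU1, hE1⟩
      have hne : {m : ℕ | ∀ j, ∃ i < m, X i ω = j}.Nonempty := by
        by_contra hc
        rw [Set.not_nonempty_iff_eq_empty] at hc
        apply hE1
        rw [hEdef]
        exact Set.mem_iInter.2 fun m => (hUiff m ω).2 fun hm =>
          Set.eq_empty_iff_forall_notMem.1 hc m hm
      by_contra hlt
      push_neg at hlt
      have hmem := Nat.sInf_mem hne
      exact (hUiff n ω).1 hU1 (hmono ω _ n hlt hmem)
  have hGmeas : ∀ n, MeasurableSet {ω | n < S ω} := by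
    intro n
    have h : {ω | n < S ω} = U n \ E := Set.ext fun ω => hSgt n ω
    rw [h]
    exact (hUmeas n).diff hEmeas
  have hSmeas : Measurable S := by
    apply measurable_to_countable'
    intro k
    rcases k with _ | k
    · have he : S ⁻¹' {0} = {ω | 0 < S ω}ᶜ := by
        ext ω
        simp [Nat.pos_iff_ne_zero]
      rw [he]
      exact (hGmeas 0).compl
    · have he : S ⁻¹' {k + 1} = {ω | k < S ω} \ {ω | k + 1 < S ω} := by
        ext ω
        simp only [Set.mem_preimage, Set.mem_singleton_iff, Set.mem_diff, Set.mem_setOf_eq, not_lt]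
        omega
      rw [he]
      exact (hGmeas k).diff (hGmeas (k + 1))
  -- the target constant
  set T : ℝ := ∑ J ∈ PS, (-1:ℝ) ^ (J.card + 1) * (1 / Q J) ^ 2 with hTdef
  -- summation identities
  have hsummand : ∀ J ∈ PS, Summable
      (fun n : ℕ => ((-1:ℝ) ^ (J.card + 1) * 2) * (((n:ℝ) + 1) * (1 - Q J) ^ n)) :=
    fun J hJ => (summable_aux (hr0 J) (hrlt J hJ)).mul_left _
  have hptsum : ∀ n : ℕ, 2 * ((n:ℝ) + 1) * p n
      = ∑ J ∈ PS, ((-1:ℝ) ^ (J.card + 1) * 2) * (((n:ℝ) + 1) * (1 - Q J) ^ n) := by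
    intro n
    rw [hpdef]
    simp only
    rw [Finset.mul_sum]
    exact Finset.sum_congr rfl fun J _ => by ring
  have hsum2 : Summable (fun n : ℕ => 2 * ((n:ℝ) + 1) * p n) := by
    rw [show (fun n : ℕ => 2 * ((n:ℝ) + 1) * p n)
        = fun n : ℕ => ∑ J ∈ PS, ((-1:ℝ) ^ (J.card + 1) * 2) * (((n:ℝ) + 1) * (1 - Q J) ^ n)
        from funext hptsum]
    exact summable_sum hsummand
  have htsum2 : ∑' n : ℕ, 2 * ((n:ℝ) + 1) * p n = 2 * T := by
    rw [tsum_congr hptsum, Summable.tsum_finsetSum hsummand, hTdef, Finset.mul_sum]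
    refine Finset.sum_congr rfl fun J hJ => ?_
    rw [tsum_mul_left, tsum_aux (hr0 J) (hrlt J hJ)]
    simp only [show (1:ℝ) - (1 - Q J) = Q J from by ring]
    ring
  -- LHS
  have hSM : AEStronglyMeasurable (fun ω => (S ω : ℝ) * ((S ω : ℝ) + 1)) μ :=
    ((measurable_from_top (f := fun s : ℕ => (s:ℝ) * ((s:ℝ) + 1))).comp
      hSmeas).aestronglyMeasurable
  have hnonneg : 0 ≤ᵐ[μ] fun ω => (S ω : ℝ) * ((S ω : ℝ) + 1) :=
    Filter.Eventually.of_forall fun ω => by positivity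
  rw [integral_eq_lintegral_of_nonneg_ae hnonneg hSM]
  have hlin : ∫⁻ ω, ENNReal.ofReal ((S ω : ℝ) * ((S ω : ℝ) + 1)) ∂μ
      = ENNReal.ofReal (∑' n : ℕ, 2 * ((n:ℝ) + 1) * p n) := by
    have hpt : ∀ ω, ENNReal.ofReal ((S ω : ℝ) * ((S ω : ℝ) + 1))
        = ∑' n : ℕ, Set.indicator {ω' | n < S ω'}
            (fun _ => ENNReal.ofReal (2 * ((n:ℝ) + 1))) ω := by
      intro ω
      simp only [Set.indicator_apply, Set.mem_setOf_eq]
      rw [tsum_eq_sum (s := Finset.range (S ω)) (fun n hn => if_neg (by simpa using hn)),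
        Finset.sum_ite_of_true (fun n hn => by simpa using hn) _ _,
        ← ENNReal.ofReal_sum_of_nonneg (fun n _ => by positivity)]
      congr 1
      calc (S ω : ℝ) * ((S ω : ℝ) + 1) = ((S ω * (S ω + 1) : ℕ) : ℝ) := by push_cast; ring
        _ = ((∑ n ∈ Finset.range (S ω), 2 * (n + 1) : ℕ) : ℝ) := by rw [gauss_aux]
        _ = ∑ n ∈ Finset.range (S ω), 2 * ((n:ℝ) + 1) := by push_cast; ring
    rw [lintegral_congr hpt,
      lintegral_tsum fun n => (measurable_const.indicator (hGmeas n)).aemeasurable]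
    have hterm : ∀ n : ℕ, ∫⁻ ω, Set.indicator {ω' | n < S ω'}
        (fun _ => ENNReal.ofReal (2 * ((n:ℝ) + 1))) ω ∂μ
          = ENNReal.ofReal (2 * ((n:ℝ) + 1) * p n) := by
      intro n
      rw [lintegral_indicator_const (hGmeas n)]
      have hUn : {ω' | n < S ω'} = U n \ E := Set.ext fun ω => hSgt n ω
      rw [hUn, measure_diff_null hμE, hμU n, ← ENNReal.ofReal_mul (by positivity)]
    rw [tsum_congr hterm,
      ← ENNReal.ofReal_tsum_of_nonneg (fun n => mul_nonneg (by positivity) (hpnonneg n)) hsum2]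
  rw [hlin, ENNReal.toReal_ofReal
    (tsum_nonneg fun n => mul_nonneg (by positivity) (hpnonneg n)), htsum2]
  -- RHS
  have hintegrand : ∀ t : ℝ, t * (1 - ∏ j, (1 - Real.exp (-q j * t)))
      = ∑ J ∈ PS, (-1:ℝ) ^ (J.card + 1) * (t * Real.exp (-(Q J * t))) := by
    intro t
    have hexp2 : (∏ j, ((1:ℝ) - Real.exp (-q j * t)))
        = ∑ J ∈ Finset.univ.powerset, (-1:ℝ) ^ J.card * Real.exp (-(Q J * t)) := by
      have hx : ∀ j : Fin N, (1:ℝ) - Real.exp (-q j * t) = -Real.exp (-q j * t) + 1 :=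
        fun j => by ring
      simp_rw [hx]
      rw [Finset.prod_add]
      refine Finset.sum_congr rfl fun J hJ => ?_
      rw [Finset.prod_const_one, mul_one]
      have h5 : ∀ j ∈ J, -Real.exp (-q j * t) = (-1) * Real.exp (-q j * t) := fun j _ => by ring
      rw [Finset.prod_congr rfl h5, Finset.prod_mul_distrib, Finset.prod_const, ← Real.exp_sum]
      congr 2
      rw [hQdef]
      simp only
      simp_rw [neg_mul]
      rw [Finset.sum_neg_distrib, ← Finset.sum_mul]
    have hy : Real.exp (-(Q ∅ * t)) = 1 := by
      rw [hQdef]; simp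
    calc t * (1 - ∏ j, (1 - Real.exp (-q j * t)))
        = t * ∑ J ∈ PS, (-1:ℝ) ^ (J.card + 1) * Real.exp (-(Q J * t)) := by
          rw [hexp2, hkey _ hy]
      _ = ∑ J ∈ PS, (-1:ℝ) ^ (J.card + 1) * (t * Real.exp (-(Q J * t))) := by
          rw [Finset.mul_sum]
          exact Finset.sum_congr rfl fun J _ => by ring
  have hinteg : ∀ J ∈ PS, IntegrableOn
      (fun t => (-1:ℝ) ^ (J.card + 1) * (t * Real.exp (-(Q J * t)))) (Set.Ioi 0) := by
    intro J hJ
    apply Integrable.const_mul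
    have h := integrableOn_rpow_mul_exp_neg_mul_rpow (p := 1) (s := 1)
      (by norm_num) one_pos (hQpos J hJ)
    have heq : (fun x : ℝ => x ^ (1:ℝ) * Real.exp (-Q J * x ^ (1:ℝ)))
        = fun t => t * Real.exp (-(Q J * t)) := by
      funext x
      rw [Real.rpow_one, neg_mul]
    rwa [heq] at h
  have hval : ∀ J ∈ PS, ∫ t in Set.Ioi (0:ℝ), t * Real.exp (-(Q J * t)) = (1 / Q J) ^ 2 := by
    intro J hJ
    have h := integral_rpow_mul_exp_neg_mul_Ioi (a := 2) (by norm_num) (hQpos J hJ)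
    rw [Real.Gamma_two, mul_one] at h
    rw [show (fun t : ℝ => t * Real.exp (-(Q J * t)))
        = fun t : ℝ => t ^ ((2:ℝ) - 1) * Real.exp (-(Q J * t)) from funext fun t => by
          rw [show (2:ℝ) - 1 = 1 by norm_num, Real.rpow_one]]
    rw [h, show ((2:ℝ)) = ((2:ℕ) : ℝ) by norm_num, Real.rpow_natCast]
  have hRHS : ∫ t in Set.Ioi (0:ℝ), t * (1 - ∏ j, (1 - Real.exp (-q j * t))) = T := by
    rw [setIntegral_congr_fun measurableSet_Ioi
      (fun t _ => hintegrand t)]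
    rw [integral_finset_sum PS hinteg, hTdef]
    refine Finset.sum_congr rfl fun J hJ => ?_
    rw [integral_const_mul, hval J hJ]
  rw [hRHS]
end

section
/- For each k ∈ ℕ, the k-th derivative of the Gamma function at 1 satisfies Γ^{(k)}(1) = ∫_0^∞ e^{−x} (ln x)^k dx; in particular Γ'(1) = −γ and Γ''(1) = π²/6 + γ², where γ is the Euler–Mascheroni constant. -/
open MeasureTheory Real
open Filter Topology Set Asymptotics

noncomputable def fk (k : ℕ) : ℝ → ℂ := fun t => ((Real.exp (-t) * Real.log t ^ k : ℝ) : ℂ)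

lemma fk_succ (k : ℕ) (t : ℝ) : fk (k+1) t = Real.log t • fk k t := by
  simp [fk, pow_succ, Complex.real_smul]
  ring

lemma fk_locInt (k : ℕ) : LocallyIntegrableOn (fk k) (Set.Ioi 0) := by
  apply ContinuousOn.locallyIntegrableOn _ measurableSet_Ioi
  apply Continuous.comp_continuousOn Complex.continuous_ofReal
  apply ContinuousOn.mul (Continuous.continuousOn (by continuity))
  exact (Real.continuousOn_log.mono (by intro x hx; exact ne_of_gt hx)).pow k

lemma fk_top (k : ℕ) (a : ℝ) : fk k =O[atTop] (fun t : ℝ => t ^ (-a)) := by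
  induction k generalizing a with
  | zero =>
    have h0 : (fun t : ℝ => Real.exp (-t)) =O[atTop] (fun t : ℝ => t ^ (-a)) := by
      simpa using (isLittleO_exp_neg_mul_rpow_atTop one_pos (-a)).isBigO
    refine IsBigO.trans ?_ h0
    apply isBigO_of_le
    intro t
    simp only [fk, pow_zero, mul_one, Complex.norm_real, Real.norm_eq_abs,
      abs_of_pos (Real.exp_pos _)]
    exact le_refl _
  | succ k ih =>
    have := isBigO_rpow_top_log_smul (show a < a + 1 by linarith) (ih (a+1))
    exact ((isBigO_congr (Filter.Eventually.of_forall fun t => (fk_succ k t)) (Filter.EventuallyEq.refl _ _)).mpr this)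

lemma fk_bot (k : ℕ) {b : ℝ} (hb : 0 < b) : fk k =O[nhdsWithin 0 (Set.Ioi 0)] (fun t : ℝ => t ^ (-b)) := by
  induction k generalizing b with
  | zero =>
    rw [isBigO_iff]
    refine ⟨1, ?_⟩
    filter_upwards [Ioo_mem_nhdsGT_of_mem (by norm_num : (0:ℝ) ∈ Set.Ico 0 1)] with t ht
    have h1 : ‖fk 0 t‖ ≤ 1 := by
      simp only [fk, pow_zero, mul_one, Complex.norm_real, Real.norm_eq_abs,
        abs_of_pos (Real.exp_pos _)]
      exact Real.exp_le_one_iff.mpr (by linarith [ht.1])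
    refine h1.trans ?_
    rw [Real.norm_eq_abs, abs_of_pos (Real.rpow_pos_of_pos ht.1 _), one_mul]
    exact Real.one_le_rpow_of_pos_of_le_one_of_nonpos ht.1 ht.2.le (by linarith)
  | succ k ih =>
    have := isBigO_rpow_zero_log_smul (show b/2 < b by linarith) (ih (by linarith : 0 < b/2))
    exact ((isBigO_congr (Filter.Eventually.of_forall fun t => (fk_succ k t)) (Filter.EventuallyEq.refl _ _)).mpr this)

lemma mellin_fk_hasDerivAt (k : ℕ) {s : ℂ} (hs : 0 < s.re) :
    HasDerivAt (mellin (fk k)) (mellin (fk (k+1)) s) s := by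
  have h := mellin_hasDerivAt_of_isBigO_rpow (a := s.re + 1) (b := s.re / 2)
    (fk_locInt k) (fk_top k (s.re + 1)) (by linarith) (fk_bot k (by linarith)) (by linarith)
  have h2 := h.2
  have : (fun t => Real.log t • fk k t) = fk (k+1) := by
    funext t; rw [fk_succ]
  rwa [this] at h2

noncomputable def Gk (k : ℕ) : ℝ → ℝ := fun s => (mellin (fk k) (s : ℂ)).re

lemma Gk_hasDerivAt (k : ℕ) {s : ℝ} (hs : 0 < s) :
    HasDerivAt (Gk k) (Gk (k+1) s) s :=
  (mellin_fk_hasDerivAt k (by simpa using hs)).real_of_complex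

lemma Gamma_eqOn_Gk : Set.EqOn Real.Gamma (Gk 0) (Set.Ioi 0) := by
  intro s hs
  rw [Set.mem_Ioi] at hs
  rw [Real.Gamma, Complex.Gamma_eq_integral (by simpa using hs), Gk]
  congr 1
  rw [Complex.GammaIntegral_eq_mellin]
  congr 1
  funext t
  simp [fk]

lemma Gk_one (k : ℕ) : Gk k 1 = ∫ x in Set.Ioi (0:ℝ), Real.exp (-x) * Real.log x ^ k := by
  rw [Gk]
  have : mellin (fk k) (1:ℝ) = ((∫ x in Set.Ioi (0:ℝ), Real.exp (-x) * Real.log x ^ k : ℝ) : ℂ) := by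
    have hi := _root_.integral_ofReal (𝕜 := ℂ)
      (f := fun x => Real.exp (-x) * Real.log x ^ k) (μ := volume.restrict (Set.Ioi 0))
    rw [mellin]
    refine Eq.trans ?_ hi
    apply MeasureTheory.integral_congr_ae
    filter_upwards with t
    simp [fk, Complex.cpow_zero]
  rw [this, Complex.ofReal_re]

lemma iteratedDeriv_Gamma_eqOn (k : ℕ) :
    Set.EqOn (iteratedDeriv k Real.Gamma) (Gk k) (Set.Ioi 0) := by
  induction k with
  | zero => simpa [iteratedDeriv_zero] using Gamma_eqOn_Gk
  | succ k ih =>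
    intro s hs
    rw [Set.mem_Ioi] at hs
    rw [iteratedDeriv_succ]
    have hev : iteratedDeriv k Real.Gamma =ᶠ[nhds s] Gk k :=
      Filter.eventuallyEq_of_mem (Ioi_mem_nhds hs) ih
    rw [hev.deriv_eq, (Gk_hasDerivAt k hs).deriv]

lemma hasDerivAt_Gamma_Gk {s : ℝ} (hs : 0 < s) : HasDerivAt Real.Gamma (Gk 1 s) s := by
  have h := Gk_hasDerivAt 0 hs
  apply h.congr_of_eventuallyEq
  filter_upwards [Ioi_mem_nhds hs] with t ht using (Gamma_eqOn_Gk ht)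

lemma Gk1_one : Gk 1 1 = -Real.eulerMascheroniConstant :=
  (hasDerivAt_Gamma_Gk one_pos).unique Real.hasDerivAt_Gamma_one

-- limit (y - sin y)/y^3 → 1/6
lemma tendsto_sub_sin_div_cube :
    Tendsto (fun y : ℝ => (y - Real.sin y) / y ^ 3) (nhdsWithin 0 {0}ᶜ) (nhds (1/6)) := by
  rw [show (1/6 : ℝ) = 0 + 1/6 by ring]
  rw [← tendsto_sub_nhds_zero_iff]
  apply squeeze_zero_norm' (a := fun y : ℝ => |y| * (5/96))
  · filter_upwards [inter_mem_nhdsWithin _ (Metric.ball_mem_nhds (0:ℝ) one_pos),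
      self_mem_nhdsWithin] with y hy hy0
    have hy1 : |y| ≤ 1 := by
      rw [Set.mem_inter_iff, Metric.mem_ball, Real.dist_eq, sub_zero] at hy
      exact hy.2.le
    have hy0' : y ≠ 0 := hy0
    have hb := Real.sin_bound hy1
    have h3 : |y| ^ 3 ≠ 0 := pow_ne_zero 3 (abs_ne_zero.mpr hy0')
    have : (y - Real.sin y) / y ^ 3 - (0 + 1/6) = -(Real.sin y - (y - y^3/6)) / y^3 := by
      field_simp
      ring
    rw [this, norm_div, norm_neg]
    have hn3 : (0:ℝ) < ‖y^3‖ := by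
      rw [Real.norm_eq_abs, abs_pow]
      positivity
    rw [div_le_iff₀ hn3]
    calc ‖Real.sin y - (y - y^3/6)‖ ≤ |y|^4 * (5/96) := by
          rw [Real.norm_eq_abs]; refine hb.trans ?_
          have h4 := pow_nonneg (abs_nonneg y) 4
          have e5 : |y|^5 = |y|^4*|y| := by ring
          rw [e5]; nlinarith [mul_le_mul_of_nonneg_left hy1 h4]
      _ = |y| * (5/96) * ‖y^3‖ := by
          rw [Real.norm_eq_abs, abs_pow]; ring
  · have : Tendsto (fun y : ℝ => |y| * (5/96)) (nhds 0) (nhds (|(0:ℝ)| * (5/96))) := by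
      exact ((continuous_abs).tendsto 0).mul_const _
    simpa using this.mono_left nhdsWithin_le_nhds

lemma tendsto_pi_mul_punctured :
    Tendsto (fun x : ℝ => Real.pi * x) (nhdsWithin 0 {0}ᶜ) (nhdsWithin 0 {0}ᶜ) := by
  apply tendsto_nhdsWithin_of_tendsto_nhds_of_eventually_within
  · have := Continuous.tendsto (by continuity : Continuous fun x : ℝ => Real.pi * x) 0
    simp only [mul_zero] at this
    exact this.mono_left nhdsWithin_le_nhds
  · filter_upwards [self_mem_nhdsWithin] with x hx
    exact mul_ne_zero Real.pi_ne_zero hx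

lemma tendsto_div_sin : Tendsto (fun y : ℝ => y / Real.sin y) (nhdsWithin 0 {0}ᶜ) (nhds 1) := by
  have h := (Real.hasDerivAt_sin 0)
  rw [hasDerivAt_iff_tendsto_slope] at h
  have h2 : Tendsto (fun y : ℝ => Real.sin y / y) (nhdsWithin 0 {0}ᶜ) (nhds 1) := by
    have : (slope Real.sin 0) = fun y : ℝ => Real.sin y / y := by
      funext y; simp [slope_def_field, div_eq_mul_inv, mul_comm]
    rw [this] at h
    simpa using h
  have h3 := h2.inv₀ one_ne_zero
  simp only [inv_div, inv_one] at h3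
  exact h3

lemma tendsto_sin_ratio :
    Tendsto (fun x : ℝ => (Real.pi * x - Real.sin (Real.pi * x)) / (x ^ 2 * Real.sin (Real.pi * x)))
      (nhdsWithin 0 {0}ᶜ) (nhds (Real.pi ^ 2 / 6)) := by
  have hA : Tendsto (fun x : ℝ => (Real.pi * x - Real.sin (Real.pi * x)) / (Real.pi * x) ^ 3)
      (nhdsWithin 0 {0}ᶜ) (nhds (1/6)) :=
    tendsto_sub_sin_div_cube.comp tendsto_pi_mul_punctured
  have hB : Tendsto (fun x : ℝ => (Real.pi * x) / Real.sin (Real.pi * x))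
      (nhdsWithin 0 {0}ᶜ) (nhds 1) :=
    tendsto_div_sin.comp tendsto_pi_mul_punctured
  have h := (hA.mul hB).mul_const (Real.pi ^ 2)
  have heq : ∀ᶠ x in nhdsWithin (0:ℝ) {0}ᶜ,
      (Real.pi * x - Real.sin (Real.pi * x)) / (Real.pi * x) ^ 3 * ((Real.pi * x) / Real.sin (Real.pi * x)) * Real.pi ^ 2
        = (Real.pi * x - Real.sin (Real.pi * x)) / (x ^ 2 * Real.sin (Real.pi * x)) := by
    filter_upwards [self_mem_nhdsWithin] with x hx
    have hx0 : x ≠ 0 := hx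
    rcases eq_or_ne (Real.sin (Real.pi * x)) 0 with hsx | hsx
    · rw [hsx]
      simp
    · field_simp
  have := (Filter.tendsto_congr' heq).mp h
  have e : (1:ℝ)/6 * 1 * Real.pi ^ 2 = Real.pi ^ 2 / 6 := by ring
  rwa [e] at this

section Main

local notation "γ" => Real.eulerMascheroniConstant

noncomputable def Ff : ℝ → ℝ := fun x => Real.Gamma (1+x) * Real.Gamma (1-x)
noncomputable def Pf : ℝ → ℝ := fun x =>
  Gk 1 (1+x) * Real.Gamma (1-x) - Real.Gamma (1+x) * Gk 1 (1-x)
noncomputable def Qf : ℝ → ℝ := fun x =>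
  Gk 2 (1+x) * Real.Gamma (1-x) - 2 * (Gk 1 (1+x) * Gk 1 (1-x)) + Real.Gamma (1+x) * Gk 2 (1-x)

lemma hasDerivAt_oneAdd (g : ℝ → ℝ) (g' : ℝ → ℝ)
    (hg : ∀ s : ℝ, 0 < s → HasDerivAt g (g' s) s) {x : ℝ} (hx : x ∈ Set.Ioo (-1:ℝ) 1) :
    HasDerivAt (fun x => g (1+x)) (g' (1+x)) x := by
  have h := (hg (1+x) (by linarith [hx.1])).comp x
    ((hasDerivAt_id x).const_add 1)
  simpa [Function.comp_def] using h

lemma hasDerivAt_oneSub (g : ℝ → ℝ) (g' : ℝ → ℝ)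
    (hg : ∀ s : ℝ, 0 < s → HasDerivAt g (g' s) s) {x : ℝ} (hx : x ∈ Set.Ioo (-1:ℝ) 1) :
    HasDerivAt (fun x => g (1-x)) (-(g' (1-x))) x := by
  have h := (hg (1-x) (by linarith [hx.2])).comp x
    ((hasDerivAt_id x).neg.const_add 1)
  simp only [Function.comp_def] at h
  have e : -(g' (1-x)) = g' (1-x) * -1 := by ring
  rw [e]
  convert h using 2


lemma hasDerivAt_Ff {x : ℝ} (hx : x ∈ Set.Ioo (-1:ℝ) 1) : HasDerivAt Ff (Pf x) x := by
  have h1 := hasDerivAt_oneAdd Real.Gamma (Gk 1) (fun s hs => hasDerivAt_Gamma_Gk hs) hx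
  have h2 := hasDerivAt_oneSub Real.Gamma (Gk 1) (fun s hs => hasDerivAt_Gamma_Gk hs) hx
  have := h1.mul h2
  refine HasDerivAt.congr_deriv this ?_
  simp [Pf]
  ring

lemma hasDerivAt_Pf {x : ℝ} (hx : x ∈ Set.Ioo (-1:ℝ) 1) : HasDerivAt Pf (Qf x) x := by
  have h1a := hasDerivAt_oneAdd (Gk 1) (Gk 2) (fun s hs => Gk_hasDerivAt 1 hs) hx
  have h1b := hasDerivAt_oneSub Real.Gamma (Gk 1) (fun s hs => hasDerivAt_Gamma_Gk hs) hx
  have h2a := hasDerivAt_oneAdd Real.Gamma (Gk 1) (fun s hs => hasDerivAt_Gamma_Gk hs) hx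
  have h2b := hasDerivAt_oneSub (Gk 1) (Gk 2) (fun s hs => Gk_hasDerivAt 1 hs) hx
  have := (h1a.mul h1b).sub (h2a.mul h2b)
  refine HasDerivAt.congr_deriv this ?_
  simp [Qf]
  ring

lemma contAt_comp_add {g : ℝ → ℝ} (hg : ∀ s : ℝ, 0 < s → ContinuousAt g s) :
    ContinuousAt (fun x : ℝ => g (1+x)) 0 := by
  have h1 : ContinuousAt (fun x : ℝ => 1 + x) 0 := by fun_prop
  have h2 : ContinuousAt g ((fun x : ℝ => 1 + x) 0) := by simpa using hg 1 one_pos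
  simpa [Function.comp_def] using h2.comp h1

lemma contAt_comp_sub {g : ℝ → ℝ} (hg : ∀ s : ℝ, 0 < s → ContinuousAt g s) :
    ContinuousAt (fun x : ℝ => g (1-x)) 0 := by
  have h1 : ContinuousAt (fun x : ℝ => 1 - x) 0 := by fun_prop
  have h2 : ContinuousAt g ((fun x : ℝ => 1 - x) 0) := by simpa using hg 1 one_pos
  simpa [Function.comp_def] using h2.comp h1

lemma contAt_Gamma' : ∀ s : ℝ, 0 < s → ContinuousAt Real.Gamma s :=
  fun s hs => (hasDerivAt_Gamma_Gk hs).differentiableAt.continuousAt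

lemma contAt_Gk (k : ℕ) : ∀ s : ℝ, 0 < s → ContinuousAt (Gk k) s :=
  fun s hs => (Gk_hasDerivAt k hs).differentiableAt.continuousAt

lemma contAt_Qf : ContinuousAt Qf 0 := by
  unfold Qf
  exact (((contAt_comp_add (contAt_Gk 2)).mul (contAt_comp_sub contAt_Gamma')).sub
    ((continuousAt_const).mul ((contAt_comp_add (contAt_Gk 1)).mul (contAt_comp_sub (contAt_Gk 1))))).add
    ((contAt_comp_add contAt_Gamma').mul (contAt_comp_sub (contAt_Gk 2)))

lemma contAt_Pf : ContinuousAt Pf 0 := by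
  unfold Pf
  exact ((contAt_comp_add (contAt_Gk 1)).mul (contAt_comp_sub contAt_Gamma')).sub
    ((contAt_comp_add contAt_Gamma').mul (contAt_comp_sub (contAt_Gk 1)))

lemma contAt_Ff : ContinuousAt Ff 0 := by
  unfold Ff
  exact (contAt_comp_add contAt_Gamma').mul (contAt_comp_sub contAt_Gamma')

lemma Ff_zero : Ff 0 = 1 := by simp [Ff, Real.Gamma_one]

lemma Pf_zero : Pf 0 = 0 := by simp [Pf]

lemma Qf_zero : Qf 0 = 2 * Gk 2 1 - 2 * γ ^ 2 := by
  simp [Qf, Real.Gamma_one, Gk1_one]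
  ring

end Main

lemma tendsto_Ff_sub_one :
    Tendsto (fun x : ℝ => (Ff x - 1) / x ^ 2) (nhdsWithin 0 {0}ᶜ) (nhds (Qf 0 / 2)) := by
  have hmem : Set.Ioo (-1:ℝ) 1 ∈ nhds (0:ℝ) := Ioo_mem_nhds (by norm_num) (by norm_num)
  have inner : Tendsto (fun x : ℝ => Pf x / (2 * x)) (nhdsWithin 0 {0}ᶜ) (nhds (Qf 0 / 2)) := by
    apply HasDerivAt.lhopital_zero_nhds (f' := Qf) (g' := fun _ => (2:ℝ))
    · filter_upwards [hmem] with x hx using hasDerivAt_Pf hx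
    · filter_upwards with x
      simpa using (hasDerivAt_id x).const_mul (2:ℝ)
    · filter_upwards with x using two_ne_zero
    · have := contAt_Pf.tendsto
      rwa [Pf_zero] at this
    · have : Continuous (fun x : ℝ => 2 * x) := by fun_prop
      simpa using this.tendsto 0
    · exact contAt_Qf.tendsto.div_const 2
  apply HasDerivAt.lhopital_zero_nhdsNE (f' := Pf) (g' := fun x => 2 * x)
  · filter_upwards [nhdsWithin_le_nhds hmem] with x hx
    exact (hasDerivAt_Ff hx).sub_const 1
  · filter_upwards with x
    simpa using hasDerivAt_pow 2 x
  · filter_upwards [self_mem_nhdsWithin] with x hx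
    exact mul_ne_zero two_ne_zero hx
  · have h0 : Tendsto (fun x : ℝ => Ff x - 1) (nhds 0) (nhds (Ff 0 - 1)) :=
      contAt_Ff.tendsto.sub_const 1
    rw [Ff_zero, sub_self] at h0
    exact h0.mono_left nhdsWithin_le_nhds
  · have : Continuous (fun x : ℝ => x ^ 2) := by fun_prop
    have h0 := this.tendsto 0
    simp only [zero_pow, ne_eq, OfNat.ofNat_ne_zero, not_false_eq_true] at h0
    exact h0.mono_left nhdsWithin_le_nhds
  · exact inner.mono_left le_rfl

lemma Ff_eventually_eq :
    ∀ᶠ x in nhdsWithin (0:ℝ) {0}ᶜ,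
      (Ff x - 1) / x ^ 2
        = (Real.pi * x - Real.sin (Real.pi * x)) / (x ^ 2 * Real.sin (Real.pi * x)) := by
  have hmem : Set.Ioo (-1:ℝ) 1 ∈ nhds (0:ℝ) := Ioo_mem_nhds (by norm_num) (by norm_num)
  filter_upwards [nhdsWithin_le_nhds hmem, self_mem_nhdsWithin] with x hx hx0
  have hx0' : x ≠ 0 := hx0
  have hsin : Real.sin (Real.pi * x) ≠ 0 := by
    have h1 : -Real.pi < Real.pi * x := by nlinarith [Real.pi_pos, hx.1, hx.2]
    have h2 : Real.pi * x < Real.pi := by nlinarith [Real.pi_pos, hx.1, hx.2]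
    rw [ne_eq, Real.sin_eq_zero_iff_of_lt_of_lt h1 h2]
    exact mul_ne_zero Real.pi_ne_zero hx0'
  have hFf : Ff x = x * (Real.pi / Real.sin (Real.pi * x)) := by
    rw [Ff, show (1:ℝ) + x = x + 1 by ring, Real.Gamma_add_one hx0', mul_assoc,
      Real.Gamma_mul_Gamma_one_sub x]
  rw [hFf]
  field_simp
  ring_nf
  rw [mul_inv_cancel₀ (by rwa [mul_comm] at hsin)]
  ring

lemma Gk2_one : Gk 2 1 = Real.pi ^ 2 / 6 + Real.eulerMascheroniConstant ^ 2 := by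
  have h1 := tendsto_Ff_sub_one
  have h2 := (Filter.tendsto_congr' Ff_eventually_eq).mpr tendsto_sin_ratio
  have h := tendsto_nhds_unique h1 h2
  rw [Qf_zero] at h
  nlinarith [h]

theorem stmt_19 :
    (∀ k : ℕ,
      iteratedDeriv k Real.Gamma 1
        = ∫ x in Set.Ioi (0:ℝ), Real.exp (-x) * Real.log x ^ k) ∧
    deriv Real.Gamma 1 = -Real.eulerMascheroniConstant ∧
    iteratedDeriv 2 Real.Gamma 1
      = Real.pi ^ 2 / 6 + Real.eulerMascheroniConstant ^ 2 := by
  refine ⟨fun k => ?_, ?_, ?_⟩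
  · exact (iteratedDeriv_Gamma_eqOn k (by norm_num : (1:ℝ) ∈ Set.Ioi 0)).trans (Gk_one k)
  · exact Real.hasDerivAt_Gamma_one.deriv
  · exact (iteratedDeriv_Gamma_eqOn 2 (by norm_num : (1:ℝ) ∈ Set.Ioi 0)).trans Gk2_one
end
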